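/- arXiv:0909.2770 — 6 statements merged into one kernel-verified Lean document; each statement's English description precedes it below -/
import Mathlib

section
/- Let G₁ and G₂ be finite simple graphs. If there exists a semi-locally-surjective graph homomorphism from G₁ to G₂, then B(G₂) ⊆ B(G₁), i.e., every positive integer k such that G₂ admits a colorful k-coloring also satisfies that G₁ admits a colorful k-coloring. -/
/-- A proper coloring of `G` with colors in `Fin k`. -/
def IsProperColoring {V : Type*} (G : SimpleGraph V) {k : ℕ} (f : V → Fin k) : Prop :=
  ∀ u v : V, G.Adj u v → f u ≠ f v

/-- A vertex `v` is b-dominating w.r.t. the coloring `f` if every color appears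
on the closed neighborhood of `v`. -/
def IsBDominating {V : Type*} (G : SimpleGraph V) {k : ℕ} (f : V → Fin k) (v : V) : Prop :=
  ∀ i : Fin k, f v = i ∨ ∃ u : V, G.Adj v u ∧ f u = i

/-- A colorful (b-) coloring: a proper coloring in which every color class contains
a b-dominating vertex. -/
def IsColorfulColoring {V : Type*} (G : SimpleGraph V) {k : ℕ} (f : V → Fin k) : Prop :=
  IsProperColoring G f ∧ ∀ i : Fin k, ∃ v : V, f v = i ∧ IsBDominating G f v

/-- `BSet G` is the set of positive integers `k` such that `G` has a colorful `k`-coloring. -/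
def BSet {V : Type*} (G : SimpleGraph V) : Set ℕ :=
  {k | 0 < k ∧ ∃ f : V → Fin k, IsColorfulColoring G f}

/-- The b-chromatic number: the maximum of `BSet G`. -/
noncomputable def bChromaticNumber {V : Type*} (G : SimpleGraph V) : ℕ :=
  sSup (BSet G)

/-- A semi-locally-surjective graph homomorphism from `G` to `H`. -/
def IsSLSHom {V W : Type*} (G : SimpleGraph V) (H : SimpleGraph W) (f : V → W) : Prop :=
  (∀ a b : V, G.Adj a b → H.Adj (f a) (f b)) ∧
  Function.Surjective f ∧
  ∀ u : W, ∃ a : V, f a = u ∧ ∀ v : W, H.Adj u v → ∃ b : V, f b = v ∧ G.Adj a b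

/-- Vertices of the Kneser graph `KG n m`: `m`-element subsets of `{1, ..., n}`. -/
def KneserVert (n m : ℕ) : Type :=
  {A : Finset ℕ // A ⊆ Finset.Icc 1 n ∧ A.card = m}

/-- The Kneser graph `KG n m`. -/
def KG (n m : ℕ) : SimpleGraph (KneserVert n m) where
  Adj X Y := X ≠ Y ∧ Disjoint X.1 Y.1
  symm := by
    constructor
    intro X Y h
    exact ⟨h.1.symm, h.2.symm⟩
  loopless := by
    constructor
    intro X h
    exact h.1 rfl

/-- If there exists a semi-locally-surjective graph homomorphism from `G₁`
to `G₂`, then `B(G₂) ⊆ B(G₁)`. -/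
theorem stmt_4 {V₁ V₂ : Type*} [Fintype V₁] [Fintype V₂]
    (G₁ : SimpleGraph V₁) (G₂ : SimpleGraph V₂)
    (h : ∃ f : V₁ → V₂, IsSLSHom G₁ G₂ f) :
    BSet G₂ ⊆ BSet G₁ := by
  obtain ⟨f, hhom, hsurj, hsls⟩ := h
  rintro k ⟨hk, g, hprop, hdom⟩
  refine ⟨hk, g ∘ f, ?_, ?_⟩
  · intro a b hab
    exact hprop _ _ (hhom a b hab)
  · intro i
    obtain ⟨v, hv, hbd⟩ := hdom i
    obtain ⟨a, ha, hA⟩ := hsls v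
    refine ⟨a, by simp [ha, hv], ?_⟩
    intro j
    rcases hbd j with hj | ⟨u, hu, hgu⟩
    · exact Or.inl (by simp [ha, hj])
    · obtain ⟨b, hb, hadj⟩ := hA u (ha ▸ hu)
      exact Or.inr ⟨b, hadj, by simp [hb, hgu]⟩
end

section
/- For every natural number k ≥ 1, the Kneser graph KG(2k+1, k) is b-continuous; that is, every integer j with χ(KG(2k+1,k)) ≤ j ≤ b(KG(2k+1,k)) belongs to B(KG(2k+1,k)). -/
open Finset

namespace KGB

-- ground pieces
def Yy (n : ℕ) : Finset ℕ := Finset.Icc 1 n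
def Tl (n k : ℕ) : Finset ℕ := Finset.Icc (n+1) (2*k+1)
def Cr (n k : ℕ) : Finset ℕ := Finset.Icc (n+1) (k+1)
def Hs (n k c : ℕ) : Finset ℕ := insert (k+2+c) (Cr n k)

lemma mem_Yy {n a : ℕ} : a ∈ Yy n ↔ 1 ≤ a ∧ a ≤ n := by simp [Yy]
lemma mem_Tl {n k a : ℕ} : a ∈ Tl n k ↔ n+1 ≤ a ∧ a ≤ 2*k+1 := by simp [Tl]
lemma mem_Cr {n k a : ℕ} : a ∈ Cr n k ↔ n+1 ≤ a ∧ a ≤ k+1 := by simp [Cr]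
lemma mem_Hs {n k c a : ℕ} : a ∈ Hs n k c ↔ a = k+2+c ∨ (n+1 ≤ a ∧ a ≤ k+1) := by
  simp [Hs, mem_Cr]

lemma card_Yy (n : ℕ) : (Yy n).card = n := by simp [Yy]
lemma card_Tl {n k : ℕ} (hnk : n ≤ k) : (Tl n k).card = 2*k+1-n := by
  simp [Tl, Nat.card_Icc]
lemma card_Cr {n k : ℕ} (hnk : n ≤ k) : (Cr n k).card = k+1-n := by
  simp [Cr, Nat.card_Icc]
lemma card_Hs {n k : ℕ} (hnk : n ≤ k) (c : ℕ) : (Hs n k c).card = k+2-n := by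
  rw [Hs, card_insert_of_notMem, card_Cr hnk]
  · omega
  · simp [mem_Cr]; omega

lemma Hs_subset_Tl {n k c : ℕ} (hc : c < n) (hnk : n ≤ k) : Hs n k c ⊆ Tl n k := by
  intro a ha
  rw [mem_Hs] at ha; rw [mem_Tl]; omega

open Classical in
/-- the coloring function (ℕ-labelled: classes `0..n-1` are "star" classes,
class `n` is the hybrid class). -/
noncomputable def Fc (n k : ℕ) (A : Finset ℕ) : ℕ :=
  if h1 : A ∩ Yy n = ∅ then n
  else if (Yy n \ A).card = 1 then ((Yy n \ A).sum id) % n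
  else if h3 : ∃ ic, ic < n ∧ (ic+1) ∈ Yy n \ A ∧ A ∩ Tl n k = Hs n k ic then
    (if ((Yy n \ A).sum id - h3.choose - 1) % n = h3.choose then n
     else ((Yy n \ A).sum id - h3.choose - 1) % n)
  else (A ∩ Yy n).min' (Finset.nonempty_iff_ne_empty.mpr h1) - 1

lemma Fc_le {n k : ℕ} (hn : 0 < n) (A : Finset ℕ) : Fc n k A ≤ n := by
  rw [Fc]
  split_ifs with h1 h2 h3 h4
  · exact le_rfl
  · exact (Nat.mod_lt _ hn).le
  · exact le_rfl
  · exact (Nat.mod_lt _ hn).le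
  · have := Finset.min'_mem (A ∩ Yy n) (Finset.nonempty_iff_ne_empty.mpr h1)
    rw [Finset.mem_inter, mem_Yy] at this
    omega

lemma Fc_of_empty {n k : ℕ} {A : Finset ℕ} (h : A ∩ Yy n = ∅) : Fc n k A = n := by
  rw [Fc, dif_pos h]

lemma Fc_of_singleton {n k : ℕ} (hn : 2 ≤ n) {A : Finset ℕ} {e : ℕ}
    (h : Yy n \ A = {e}) : Fc n k A = e % n := by
  have h1 : A ∩ Yy n ≠ ∅ := by
    have hc := Finset.card_sdiff_add_card_inter (Yy n) A
    rw [h, card_Yy] at hc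
    intro hemp
    rw [Finset.inter_comm, hemp] at hc
    simp at hc; omega
  have h2 : (Yy n \ A).card = 1 := by rw [h]; simp
  rw [Fc, dif_neg h1, if_pos h2, h]
  simp

lemma inter_split {n k : ℕ} (hnk : n ≤ k) {A : Finset ℕ}
    (hsub : A ⊆ Finset.Icc 1 (2*k+1)) :
    (A ∩ Yy n).card + (A ∩ Tl n k).card = A.card := by
  have hdisj : Disjoint (A ∩ Yy n) (A ∩ Tl n k) := by
    rw [Finset.disjoint_left]
    intro a ha hb
    rw [Finset.mem_inter, mem_Yy] at ha
    rw [Finset.mem_inter, mem_Tl] at hb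
    omega
  have hun : (A ∩ Yy n) ∪ (A ∩ Tl n k) = A := by
    ext a
    simp only [Finset.mem_union, Finset.mem_inter, mem_Yy, mem_Tl]
    constructor
    · rintro (⟨h, _⟩ | ⟨h, _⟩) <;> exact h
    · intro ha
      have h2 := hsub ha
      rw [Finset.mem_Icc] at h2
      by_cases han : a ≤ n
      · exact Or.inl ⟨ha, by omega⟩
      · exact Or.inr ⟨ha, by omega⟩
  rw [← Finset.card_union_of_disjoint hdisj, hun]

lemma sdiff_card {n : ℕ} (A : Finset ℕ) :
    (Yy n \ A).card + (A ∩ Yy n).card = n := by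
  have hc := Finset.card_sdiff_add_card_inter (Yy n) A
  rw [card_Yy, Finset.inter_comm] at hc
  exact hc

/-- uniqueness of the index in rule 3 -/
lemma Hs_inj {n k : ℕ} {c c' : ℕ} (h : Hs n k c = Hs n k c') : c = c' := by
  have : (k+2+c : ℕ) ∈ Hs n k c' := by rw [← h, mem_Hs]; left; rfl
  rw [mem_Hs] at this
  omega

lemma Fc_of_pair {n k : ℕ} (hn : 2 ≤ n) (hnk : n ≤ k) {A : Finset ℕ} {ic jc : ℕ}
    (hic : ic < n) (hjc : jc < n) (hij : ic ≠ jc)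
    (hY : Yy n \ A = {ic+1, jc+1}) (hT : A ∩ Tl n k = Hs n k ic) :
    Fc n k A = if (jc+1) % n = ic then n else (jc+1) % n := by
  have hcard2 : (Yy n \ A).card = 2 := by
    rw [hY, Finset.card_pair (by omega)]
  have hAY : (A ∩ Yy n).card = n - 2 := by
    have := sdiff_card (n := n) A; omega
  rcases Nat.lt_or_ge n 3 with hn2 | hn3
  · -- n = 2 : rule 1 fires, and the `if` is in the `then` branch
    have hn2' : n = 2 := by omega
    have hempty : A ∩ Yy n = ∅ := by
      rw [← Finset.card_eq_zero]; omega
    rw [Fc_of_empty hempty]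
    have : (jc+1) % n = ic := by
      subst hn2'
      interval_cases ic <;> interval_cases jc <;> simp_all
    rw [if_pos this]
  · -- n ≥ 3
    have h1 : A ∩ Yy n ≠ ∅ := by
      intro hemp
      rw [hemp] at hAY
      simp at hAY; omega
    have h2 : ¬ (Yy n \ A).card = 1 := by omega
    have h3 : ∃ i, i < n ∧ (i+1) ∈ Yy n \ A ∧ A ∩ Tl n k = Hs n k i := by
      exact ⟨ic, hic, by rw [hY]; simp, hT⟩
    rw [Fc, dif_neg h1, if_neg h2, dif_pos h3]
    obtain ⟨hc1, _, hc3⟩ := h3.choose_spec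
    have hcc : h3.choose = ic := Hs_inj (by rw [← hc3, hT])
    have hsum : (Yy n \ A).sum id = (ic+1) + (jc+1) := by
      rw [hY, Finset.sum_pair (by omega)]; rfl
    rw [hcc, hsum]
    have : (ic + 1 + (jc + 1) - ic - 1) = jc + 1 := by omega
    rw [this]

lemma Fc_of_single_inter {n k : ℕ} (hn : 2 ≤ n) {A : Finset ℕ} {c : ℕ}
    (hc : c < n) (hAY : A ∩ Yy n = {c+1})
    (hno3 : ∀ ic, ic < n → A ∩ Tl n k ≠ Hs n k ic) :
    Fc n k A = c := by
  have h1 : A ∩ Yy n ≠ ∅ := by rw [hAY]; simp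
  have hsd : (Yy n \ A).card = n - 1 := by
    have := sdiff_card (n := n) A
    rw [hAY] at this; simp at this; omega
  have h3 : ¬ ∃ ic, ic < n ∧ (ic+1) ∈ Yy n \ A ∧ A ∩ Tl n k = Hs n k ic := by
    rintro ⟨ic, hlt, _, heq⟩
    exact hno3 ic hlt heq
  rcases Nat.lt_or_ge n 3 with hn2 | hn3
  · -- n = 2, rule 2 fires
    have hn2' : n = 2 := by omega
    have hYd : Yy n \ A = {(2 - c) + 1 - 1} := by
      subst hn2'
      ext a
      simp only [mem_sdiff, mem_Yy, Finset.mem_singleton]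
      constructor
      · rintro ⟨⟨ha1, ha2⟩, ha3⟩
        have : a ≠ c + 1 := by
          intro h; subst h
          exact ha3 (by have : c+1 ∈ A ∩ Yy 2 := by rw [hAY]; simp
                        exact (Finset.mem_inter.mp this).1)
        interval_cases a <;> interval_cases c <;> omega
      · intro ha
        have hcA : c + 1 ∈ A := by
          have : c+1 ∈ A ∩ Yy 2 := by rw [hAY]; simp
          exact (Finset.mem_inter.mp this).1
        constructor
        · omega
        · intro haA
          have : a ∈ A ∩ Yy 2 := Finset.mem_inter.mpr ⟨haA, by rw [mem_Yy]; omega⟩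
          rw [hAY] at this
          simp at this
          omega
    rw [Fc_of_singleton hn hYd]
    subst hn2'
    interval_cases c <;> rfl
  · -- n ≥ 3, rule 4
    have h2 : ¬ (Yy n \ A).card = 1 := by omega
    rw [Fc, dif_neg h1, if_neg h2, dif_neg h3]
    have hmem := Finset.min'_mem (A ∩ Yy n) (Finset.nonempty_iff_ne_empty.mpr h1)
    set m := (A ∩ Yy n).min' (Finset.nonempty_iff_ne_empty.mpr h1) with hm
    rw [hAY] at hmem
    simp only [Finset.mem_singleton] at hmem
    omega

lemma star_of_Fc {n k : ℕ} (hn : 2 ≤ n) (hnk : n ≤ k) {A : Finset ℕ} {v : ℕ}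
    (hsub : A ⊆ Finset.Icc 1 (2*k+1)) (hcard : A.card = k)
    (hv : Fc n k A = v) (hvn : v < n) : v + 1 ∈ A := by
  by_cases h1 : A ∩ Yy n = ∅
  · rw [Fc_of_empty h1] at hv; omega
  by_cases h2 : (Yy n \ A).card = 1
  · obtain ⟨e, he⟩ := Finset.card_eq_one.mp h2
    rw [Fc_of_singleton hn he] at hv
    have heY : e ∈ Yy n ∧ e ∉ A := by
      have : e ∈ Yy n \ A := by rw [he]; simp
      exact ⟨(Finset.mem_sdiff.mp this).1, (Finset.mem_sdiff.mp this).2⟩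
    rw [mem_Yy] at heY
    have hv1Y : v + 1 ∈ Yy n := by rw [mem_Yy]; omega
    have hvne : v + 1 ≠ e := by
      rcases Nat.lt_or_ge e n with h | h
      · rw [Nat.mod_eq_of_lt h] at hv; omega
      · have : e = n := by omega
        subst this
        rw [Nat.mod_self] at hv; omega
    by_contra hnA
    have : v + 1 ∈ Yy n \ A := Finset.mem_sdiff.mpr ⟨hv1Y, hnA⟩
    rw [he] at this; simp at this; exact hvne this
  by_cases h3 : ∃ ic, ic < n ∧ (ic+1) ∈ Yy n \ A ∧ A ∩ Tl n k = Hs n k ic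
  · rw [Fc, dif_neg h1, if_neg h2, dif_pos h3] at hv
    obtain ⟨hic, hicY, hicT⟩ := h3.choose_spec
    set ic := h3.choose with hicdef
    -- card of Yy \ A is 2
    have hAT : (A ∩ Tl n k).card = k + 2 - n := by rw [hicT, card_Hs hnk]
    have hAY : (A ∩ Yy n).card = n - 2 := by
      have := inter_split hnk hsub; omega
    have hsd2 : (Yy n \ A).card = 2 := by
      have := sdiff_card (n := n) A; omega
    obtain ⟨a, b, hab, hset⟩ := Finset.card_eq_two.mp hsd2
    have hicmem : ic + 1 = a ∨ ic + 1 = b := by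
      rw [hset] at hicY; simpa using hicY
    have haY : a ∈ Yy n ∧ a ∉ A := by
      have : a ∈ Yy n \ A := by rw [hset]; simp
      exact Finset.mem_sdiff.mp this
    have hbY : b ∈ Yy n ∧ b ∉ A := by
      have : b ∈ Yy n \ A := by rw [hset]; simp
      exact Finset.mem_sdiff.mp this
    rw [mem_Yy] at haY hbY
    have hsum : (Yy n \ A).sum id = a + b := by
      rw [hset, Finset.sum_pair hab]; rfl
    rw [hsum] at hv
    -- jel is the other element
    set jel := a + b - ic - 1 with hjel
    have hjelval : (ic + 1 = a ∧ jel = b) ∨ (ic + 1 = b ∧ jel = a) := by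
      rcases hicmem with h | h
      · left; exact ⟨h, by omega⟩
      · right; exact ⟨h, by omega⟩
    have hjelY : 1 ≤ jel ∧ jel ≤ n := by rcases hjelval with ⟨_, h⟩ | ⟨_, h⟩ <;> omega
    -- since v < n, the if must be the else branch
    have hvne_ic : v ≠ ic ∧ v = jel % n := by
      by_cases hcond : jel % n = ic
      · rw [if_pos hcond] at hv; omega
      · rw [if_neg hcond] at hv; exact ⟨by omega, hv.symm⟩
    obtain ⟨hvic, hvjel⟩ := hvne_ic
    have hv1Y : v + 1 ∈ Yy n := by rw [mem_Yy]; omega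
    have hvne_jel : v + 1 ≠ jel := by
      rcases Nat.lt_or_ge jel n with h | h
      · rw [Nat.mod_eq_of_lt h] at hvjel; omega
      · have : jel = n := by omega
        rw [this, Nat.mod_self] at hvjel; omega
    have hvne_a : v + 1 ≠ a ∧ v + 1 ≠ b := by
      rcases hjelval with ⟨h1', h2'⟩ | ⟨h1', h2'⟩ <;>
        constructor <;> omega
    by_contra hnA
    have : v + 1 ∈ Yy n \ A := Finset.mem_sdiff.mpr ⟨hv1Y, hnA⟩
    rw [hset] at this
    simp at this
    rcases this with h | h
    · exact hvne_a.1 h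
    · exact hvne_a.2 h
  · rw [Fc, dif_neg h1, if_neg h2, dif_neg h3] at hv
    have hmem := Finset.min'_mem (A ∩ Yy n) (Finset.nonempty_iff_ne_empty.mpr h1)
    have h1le : 1 ≤ (A ∩ Yy n).min' (Finset.nonempty_iff_ne_empty.mpr h1) := by
      have := (Finset.mem_inter.mp hmem).2
      rw [mem_Yy] at this; omega
    have : v + 1 = (A ∩ Yy n).min' (Finset.nonempty_iff_ne_empty.mpr h1) := by omega
    rw [this]
    exact (Finset.mem_inter.mp hmem).1

lemma T_of_Fc {n k : ℕ} (hn : 2 ≤ n) {A : Finset ℕ}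
    (hv : Fc n k A = n) :
    A ∩ Yy n = ∅ ∨ ∃ ic, ic < n ∧ A ∩ Tl n k = Hs n k ic := by
  by_cases h1 : A ∩ Yy n = ∅
  · exact Or.inl h1
  by_cases h2 : (Yy n \ A).card = 1
  · exfalso
    obtain ⟨e, he⟩ := Finset.card_eq_one.mp h2
    rw [Fc_of_singleton hn he] at hv
    have : e % n < n := Nat.mod_lt _ (by omega)
    omega
  by_cases h3 : ∃ ic, ic < n ∧ (ic+1) ∈ Yy n \ A ∧ A ∩ Tl n k = Hs n k ic
  · obtain ⟨ic, hlt, _, heq⟩ := h3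
    exact Or.inr ⟨ic, hlt, heq⟩
  · exfalso
    rw [Fc, dif_neg h1, if_neg h2, dif_neg h3] at hv
    have hmem := Finset.min'_mem (A ∩ Yy n) (Finset.nonempty_iff_ne_empty.mpr h1)
    have := (Finset.mem_inter.mp hmem).2
    rw [mem_Yy] at this
    omega

/-! ### witnesses -/

def jcf (n w : ℕ) : ℕ := (w + n - 1) % n

lemma jcf_lt {n : ℕ} (hn : 2 ≤ n) (w : ℕ) : jcf n w < n := Nat.mod_lt _ (by omega)

lemma jcf_succ {n w : ℕ} (hn : 2 ≤ n) (hw : w < n) : (jcf n w + 1) % n = w := by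
  rw [jcf, Nat.mod_add_mod]
  have : w + n - 1 + 1 = w + n := by omega
  rw [this, Nat.add_mod_right, Nat.mod_eq_of_lt hw]

lemma succ_mod_ne {n c : ℕ} (hn : 2 ≤ n) (hc : c < n) : (c+1) % n ≠ c := by
  rcases Nat.lt_or_ge (c+1) n with h | h
  · rw [Nat.mod_eq_of_lt h]; omega
  · have : c + 1 = n := by omega
    rw [this, Nat.mod_self]; omega

lemma jcf_ne {n c w : ℕ} (hn : 2 ≤ n) (hw : w < n) (hne : w ≠ (c+1) % n) :
    jcf n w ≠ c := by
  intro h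
  apply hne
  rw [← jcf_succ hn hw, h]

def Ac (n k c : ℕ) : Finset ℕ := insert (c+1) (Tl n k \ Hs n k c)
def AT (n k : ℕ) : Finset ℕ := Finset.Icc (n+1) (n+k)
def Tp (n k : ℕ) : Finset ℕ := Finset.Icc (n+k+1) (2*k+1)
def W2 (n k c : ℕ) : Finset ℕ := (Yy n \ {c+1}) ∪ Cr n k
def W3 (n k c w : ℕ) : Finset ℕ := (Yy n \ {c+1, jcf n w + 1}) ∪ Hs n k c
def W4 (n k w : ℕ) : Finset ℕ := (Yy n \ {jcf n w + 1}) ∪ Tp n k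

lemma mem_Ac {n k c a : ℕ} : a ∈ Ac n k c ↔ a = c+1 ∨ (n+1 ≤ a ∧ a ≤ 2*k+1 ∧ ¬(a = k+2+c ∨ (n+1 ≤ a ∧ a ≤ k+1))) := by
  simp [Ac, mem_Tl, mem_Hs]; tauto
lemma mem_AT {n k a : ℕ} : a ∈ AT n k ↔ n+1 ≤ a ∧ a ≤ n+k := by simp [AT]
lemma mem_Tp {n k a : ℕ} : a ∈ Tp n k ↔ n+k+1 ≤ a ∧ a ≤ 2*k+1 := by simp [Tp]
lemma mem_W2 {n k c a : ℕ} : a ∈ W2 n k c ↔ ((1 ≤ a ∧ a ≤ n) ∧ a ≠ c+1) ∨ (n+1 ≤ a ∧ a ≤ k+1) := by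
  simp [W2, mem_Yy, mem_Cr]
lemma mem_W3 {n k c w a : ℕ} :
    a ∈ W3 n k c w ↔ ((1 ≤ a ∧ a ≤ n) ∧ a ≠ c+1 ∧ a ≠ jcf n w + 1) ∨ (a = k+2+c ∨ (n+1 ≤ a ∧ a ≤ k+1)) := by
  simp [W3, mem_Yy, mem_Hs]
  try tauto
lemma mem_W4 {n k w a : ℕ} :
    a ∈ W4 n k w ↔ ((1 ≤ a ∧ a ≤ n) ∧ a ≠ jcf n w + 1) ∨ (n+k+1 ≤ a ∧ a ≤ 2*k+1) := by
  simp [W4, mem_Yy, mem_Tp]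

/-! ### Fc values of base vertices and witnesses -/

lemma Fc_Ac {n k c : ℕ} (hn : 2 ≤ n) (hnk : n ≤ k) (hc : c < n) :
    Fc n k (Ac n k c) = c := by
  apply Fc_of_single_inter hn hc
  · ext a
    simp only [Finset.mem_inter, mem_Ac, mem_Yy, Finset.mem_singleton]
    omega
  · intro ic hic heq
    have h1 : (n+1 : ℕ) ∈ Hs n k ic := by rw [mem_Hs]; right; omega
    rw [← heq] at h1
    rw [Finset.mem_inter, mem_Ac] at h1
    omega

lemma Fc_AT {n k : ℕ} : Fc n k (AT n k) = n := by
  apply Fc_of_empty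
  rw [Finset.eq_empty_iff_forall_notMem]
  intro a h
  rw [Finset.mem_inter, mem_AT, mem_Yy] at h
  omega

lemma Fc_W2 {n k c : ℕ} (hn : 2 ≤ n) (hnk : n ≤ k) (hc : c < n) :
    Fc n k (W2 n k c) = (c+1) % n := by
  apply Fc_of_singleton hn
  ext a
  simp only [Finset.mem_sdiff, mem_Yy, mem_W2, Finset.mem_singleton]
  omega

lemma Fc_W3 {n k c w : ℕ} (hn : 2 ≤ n) (hnk : n ≤ k) (hc : c < n) (hw : w < n)
    (hne : w ≠ (c+1) % n) :
    Fc n k (W3 n k c w) = if w = c then n else w := by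
  have hjne : jcf n w ≠ c := jcf_ne hn hw hne
  have hjlt : jcf n w < n := jcf_lt hn w
  have h := Fc_of_pair (A := W3 n k c w) hn hnk hc hjlt (Ne.symm hjne) ?_ ?_
  · rw [h, jcf_succ hn hw]
  · ext a
    simp only [Finset.mem_sdiff, mem_Yy, mem_W3, Finset.mem_insert, Finset.mem_singleton]
    omega
  · ext a
    simp only [Finset.mem_inter, mem_W3, mem_Tl, mem_Hs]
    omega

lemma Fc_W4 {n k w : ℕ} (hn : 2 ≤ n) (hnk : n ≤ k) (hw : w < n) :
    Fc n k (W4 n k w) = w := by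
  have h := Fc_of_singleton (n := n) (k := k) (A := W4 n k w) (e := jcf n w + 1) hn ?_
  · rw [h, jcf_succ hn hw]
  · ext a
    simp only [Finset.mem_sdiff, mem_Yy, mem_W4, Finset.mem_singleton]
    have := jcf_lt hn w
    omega

/-! ### cards and subsets -/

lemma subset_Icc_of_mem {n k : ℕ} (hnk : n ≤ k) {A : Finset ℕ}
    (h : ∀ a ∈ A, 1 ≤ a ∧ a ≤ 2*k+1) : A ⊆ Finset.Icc 1 (2*k+1) := by
  intro a ha; rw [Finset.mem_Icc]; exact h a ha

lemma Ac_subset {n k c : ℕ} (hn : 2 ≤ n) (hnk : n ≤ k) (hc : c < n) :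
    Ac n k c ⊆ Finset.Icc 1 (2*k+1) := by
  intro a ha; rw [mem_Ac] at ha; rw [Finset.mem_Icc]; omega

lemma AT_subset {n k : ℕ} (hnk : n ≤ k) : AT n k ⊆ Finset.Icc 1 (2*k+1) := by
  intro a ha; rw [mem_AT] at ha; rw [Finset.mem_Icc]; omega

lemma W2_subset {n k c : ℕ} (hnk : n ≤ k) : W2 n k c ⊆ Finset.Icc 1 (2*k+1) := by
  intro a ha; rw [mem_W2] at ha; rw [Finset.mem_Icc]; omega

lemma W3_subset {n k c w : ℕ} (hnk : n ≤ k) (hc : c < n) :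
    W3 n k c w ⊆ Finset.Icc 1 (2*k+1) := by
  intro a ha; rw [mem_W3] at ha; rw [Finset.mem_Icc]; omega

lemma W4_subset {n k w : ℕ} (hnk : n ≤ k) : W4 n k w ⊆ Finset.Icc 1 (2*k+1) := by
  intro a ha; rw [mem_W4] at ha; rw [Finset.mem_Icc]; omega

lemma card_union_parts {Y' H' : Finset ℕ} (m : ℕ)
    (hd : ∀ a ∈ Y', a ≤ m) (hh : ∀ a ∈ H', m+1 ≤ a) :
    (Y' ∪ H').card = Y'.card + H'.card := by
  apply Finset.card_union_of_disjoint
  rw [Finset.disjoint_left]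
  intro a ha hb
  have := hd a ha
  have := hh a hb
  omega

lemma card_Ac {n k c : ℕ} (hn : 2 ≤ n) (hnk : n ≤ k) (hc : c < n) :
    (Ac n k c).card = k := by
  rw [Ac, Finset.card_insert_of_notMem, Finset.card_sdiff_of_subset (Hs_subset_Tl hc hnk),
      card_Tl hnk, card_Hs hnk]
  · omega
  · rw [Finset.mem_sdiff, mem_Tl]
    intro h
    omega

lemma card_AT {n k : ℕ} : (AT n k).card = k := by
  rw [AT, Nat.card_Icc]; omega

lemma card_Tp {n k : ℕ} (hnk : n ≤ k) : (Tp n k).card = k+1-n := by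
  rw [Tp, Nat.card_Icc]; omega

lemma card_W2 {n k c : ℕ} (hn : 2 ≤ n) (hnk : n ≤ k) (hc : c < n) :
    (W2 n k c).card = k := by
  rw [W2, card_union_parts n (by intro a ha; rw [Finset.mem_sdiff, mem_Yy] at ha; omega)
        (by intro a ha; rw [mem_Cr] at ha; omega),
      Finset.card_sdiff_of_subset (by intro a ha; rw [Finset.mem_singleton] at ha; rw [mem_Yy]; omega),
      card_Yy, card_Cr hnk]
  simp
  omega

lemma card_W3 {n k c w : ℕ} (hn : 2 ≤ n) (hnk : n ≤ k) (hc : c < n) (hw : w < n)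
    (hne : w ≠ (c+1) % n) :
    (W3 n k c w).card = k := by
  have hjne : jcf n w ≠ c := jcf_ne hn hw hne
  have hjlt : jcf n w < n := jcf_lt hn w
  rw [W3, card_union_parts n (by intro a ha; rw [Finset.mem_sdiff, mem_Yy] at ha; omega)
        (by intro a ha; rw [mem_Hs] at ha; omega),
      Finset.card_sdiff_of_subset (by intro a ha; rw [Finset.mem_insert, Finset.mem_singleton] at ha
                                      rw [mem_Yy]; omega),
      card_Yy, card_Hs hnk, Finset.card_pair (by omega)]
  omega

lemma card_W4 {n k w : ℕ} (hn : 2 ≤ n) (hnk : n ≤ k) (hw : w < n) :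
    (W4 n k w).card = k := by
  have hjlt : jcf n w < n := jcf_lt hn w
  rw [W4, card_union_parts n (by intro a ha; rw [Finset.mem_sdiff, mem_Yy] at ha; omega)
        (by intro a ha; rw [mem_Tp] at ha; omega),
      Finset.card_sdiff_of_subset (by intro a ha; rw [Finset.mem_singleton] at ha; rw [mem_Yy]; omega),
      card_Yy, card_Tp hnk]
  simp
  omega

/-! ### the coloring and its properties -/

noncomputable def fKN (n k : ℕ) (hn : 2 ≤ n) : KneserVert (2*k+1) k → Fin (n+1) :=
  fun A => ⟨Fc n k A.1, by have := Fc_le (n := n) (k := k) (by omega) A.1; omega⟩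


lemma mixed_aux {n k ic : ℕ} (hn : 2 ≤ n) (hnk : n ≤ k) (hic : ic < n)
    {U V' : Finset ℕ} (hU : U ⊆ Tl n k) (hUc : U.card = k)
    (hV : V' ∩ Tl n k = Hs n k ic) (hdisj : Disjoint U V') : False := by
  have hsub : U ⊆ Tl n k \ Hs n k ic := by
    intro a ha
    rw [Finset.mem_sdiff]
    refine ⟨hU ha, fun hmem => ?_⟩
    have haV : a ∈ V' := by
      have : a ∈ V' ∩ Tl n k := by rw [hV]; exact hmem
      exact (Finset.mem_inter.mp this).1
    exact Finset.disjoint_left.mp hdisj ha haV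
  have := Finset.card_le_card hsub
  rw [hUc, Finset.card_sdiff_of_subset (Hs_subset_Tl hic hnk), card_Tl hnk, card_Hs hnk] at this
  omega

lemma fKN_proper {n k : ℕ} (hn : 2 ≤ n) (hnk : n ≤ k) :
    IsProperColoring (KG (2*k+1) k) (fKN n k hn) := by
  intro u v huv heq
  obtain ⟨hne, hdisj⟩ := huv
  have hval : Fc n k u.1 = Fc n k v.1 := congrArg Fin.val heq
  set w := Fc n k v.1 with hw
  have hwle : w ≤ n := Fc_le (by omega) v.1
  rcases Nat.lt_or_ge w n with hlt | hge
  · -- star class: both contain w+1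
    have h1 : w + 1 ∈ u.1 := star_of_Fc hn hnk u.2.1 u.2.2 hval hlt
    have h2 : w + 1 ∈ v.1 := star_of_Fc hn hnk v.2.1 v.2.2 rfl hlt
    exact Finset.disjoint_left.mp hdisj h1 h2
  · -- class T
    have hwn : w = n := by omega
    have hu := T_of_Fc (n := n) (k := k) hn (A := u.1) (by rw [hval]; exact hwn)
    have hv' := T_of_Fc (n := n) (k := k) hn (A := v.1) (by rw [← hw]; exact hwn)
    -- a set in class T with empty Yy-intersection is a subset of Tl
    have tsub : ∀ B : KneserVert (2*k+1) k, B.1 ∩ Yy n = ∅ → B.1 ⊆ Tl n k := by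
      intro B hB a ha
      have h2 := B.2.1 ha
      rw [Finset.mem_Icc] at h2
      rw [mem_Tl]
      rcases Nat.lt_or_ge a (n+1) with h | h
      · exfalso
        have : a ∈ B.1 ∩ Yy n := Finset.mem_inter.mpr ⟨ha, by rw [mem_Yy]; omega⟩
        rw [hB] at this; exact absurd this (Finset.notMem_empty a)
      · omega
    rcases hu with hu0 | ⟨ic, hic, hicT⟩ <;> rcases hv' with hv0 | ⟨ic', hic', hicT'⟩
    · -- both tail subsets
      have h1 : u.1 ⊆ Tl n k := tsub u hu0
      have h2 : v.1 ⊆ Tl n k := tsub v hv0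
      have hcard : (u.1 ∪ v.1).card = 2*k := by
        rw [Finset.card_union_of_disjoint hdisj, u.2.2, v.2.2]; omega
      have : (u.1 ∪ v.1).card ≤ (Tl n k).card :=
        Finset.card_le_card (Finset.union_subset h1 h2)
      rw [hcard, card_Tl hnk] at this
      omega
    · -- u tail subset, v contains Hs ic'
      exact mixed_aux hn hnk hic' (tsub u hu0) u.2.2 hicT' hdisj
    · -- v tail subset, u contains Hs ic
      exact mixed_aux hn hnk hic (tsub v hv0) v.2.2 hicT hdisj.symm
    · -- both contain n+1 via core
      have h1 : (n+1 : ℕ) ∈ u.1 := by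
        have : (n+1 : ℕ) ∈ u.1 ∩ Tl n k := by rw [hicT, mem_Hs]; right; omega
        exact (Finset.mem_inter.mp this).1
      have h2 : (n+1 : ℕ) ∈ v.1 := by
        have : (n+1 : ℕ) ∈ v.1 ∩ Tl n k := by rw [hicT', mem_Hs]; right; omega
        exact (Finset.mem_inter.mp this).1
      exact Finset.disjoint_left.mp hdisj h1 h2

/-! ### b-domination -/

lemma adj_of_disj {k : ℕ} (hk : 1 ≤ k) (u v : KneserVert (2*k+1) k)
    (h : Disjoint u.1 v.1) : (KG (2*k+1) k).Adj u v := by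
  refine ⟨fun heq => ?_, h⟩
  subst heq
  rw [Finset.disjoint_self_iff_empty] at h
  have := u.2.2
  rw [h] at this
  simp at this
  omega

noncomputable def vAc (n k c : ℕ) (hn : 2 ≤ n) (hnk : n ≤ k) (hc : c < n) :
    KneserVert (2*k+1) k :=
  ⟨Ac n k c, Ac_subset hn hnk hc, card_Ac hn hnk hc⟩

noncomputable def vAT (n k : ℕ) (hnk : n ≤ k) : KneserVert (2*k+1) k :=
  ⟨AT n k, AT_subset hnk, card_AT⟩

lemma disj_Ac_W2 {n k c : ℕ} (hn : 2 ≤ n) (hnk : n ≤ k) (hc : c < n) :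
    Disjoint (Ac n k c) (W2 n k c) := by
  rw [Finset.disjoint_left]
  intro a ha hb
  rw [mem_Ac] at ha
  rw [mem_W2] at hb
  omega

lemma disj_Ac_W3 {n k c w : ℕ} (hn : 2 ≤ n) (hnk : n ≤ k) (hc : c < n) :
    Disjoint (Ac n k c) (W3 n k c w) := by
  rw [Finset.disjoint_left]
  intro a ha hb
  rw [mem_Ac] at ha
  rw [mem_W3] at hb
  omega

lemma disj_AT_W4 {n k w : ℕ} : Disjoint (AT n k) (W4 n k w) := by
  rw [Finset.disjoint_left]
  intro a ha hb
  rw [mem_AT] at ha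
  rw [mem_W4] at hb
  omega

lemma bdom_Ac {n k c : ℕ} (hn : 2 ≤ n) (hnk : n ≤ k) (hc : c < n) :
    IsBDominating (KG (2*k+1) k) (fKN n k hn) (vAc n k c hn hnk hc) := by
  intro i
  have hk1 : 1 ≤ k := by omega
  by_cases hic : (i : ℕ) = c
  · left
    apply Fin.ext
    show Fc n k (Ac n k c) = (i : ℕ)
    rw [Fc_Ac hn hnk hc, hic]
  · right
    by_cases hin : (i : ℕ) = n
    · -- witness for the hybrid class
      have hccne : c ≠ (c+1) % n := (succ_mod_ne hn hc).symm
      refine ⟨⟨W3 n k c c, W3_subset hnk hc, card_W3 hn hnk hc hc hccne⟩,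
        adj_of_disj hk1 _ _ (disj_Ac_W3 hn hnk hc), ?_⟩
      apply Fin.ext
      show Fc n k (W3 n k c c) = (i : ℕ)
      rw [Fc_W3 hn hnk hc hc hccne, if_pos rfl, hin]
    · by_cases hisucc : (i : ℕ) = (c+1) % n
      · refine ⟨⟨W2 n k c, W2_subset hnk, card_W2 hn hnk hc⟩,
          adj_of_disj hk1 _ _ (disj_Ac_W2 hn hnk hc), ?_⟩
        apply Fin.ext
        show Fc n k (W2 n k c) = (i : ℕ)
        rw [Fc_W2 hn hnk hc, hisucc]
      · have hilt : (i : ℕ) < n := by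
          have := i.2; omega
        refine ⟨⟨W3 n k c (i : ℕ), W3_subset hnk hc, card_W3 hn hnk hc hilt hisucc⟩,
          adj_of_disj hk1 _ _ (disj_Ac_W3 hn hnk hc), ?_⟩
        apply Fin.ext
        show Fc n k (W3 n k c (i : ℕ)) = (i : ℕ)
        rw [Fc_W3 hn hnk hc hilt hisucc, if_neg hic]

lemma bdom_AT {n k : ℕ} (hn : 2 ≤ n) (hnk : n ≤ k) :
    IsBDominating (KG (2*k+1) k) (fKN n k hn) (vAT n k hnk) := by
  intro i
  have hk1 : 1 ≤ k := by omega
  by_cases hin : (i : ℕ) = n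
  · left
    apply Fin.ext
    show Fc n k (AT n k) = (i : ℕ)
    rw [Fc_AT, hin]
  · right
    have hilt : (i : ℕ) < n := by have := i.2; omega
    refine ⟨⟨W4 n k (i : ℕ), W4_subset hnk, card_W4 hn hnk hilt⟩,
      adj_of_disj hk1 _ _ disj_AT_W4, ?_⟩
    apply Fin.ext
    show Fc n k (W4 n k (i : ℕ)) = (i : ℕ)
    rw [Fc_W4 hn hnk hilt]

theorem construction {n k : ℕ} (hn : 2 ≤ n) (hnk : n ≤ k) :
    (n+1) ∈ BSet (KG (2*k+1) k) := by
  refine ⟨by omega, fKN n k hn, fKN_proper hn hnk, ?_⟩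
  intro i
  by_cases hin : (i : ℕ) = n
  · refine ⟨vAT n k hnk, ?_, bdom_AT hn hnk⟩
    apply Fin.ext
    show Fc n k (AT n k) = (i : ℕ)
    rw [Fc_AT, hin]
  · have hilt : (i : ℕ) < n := by have := i.2; omega
    refine ⟨vAc n k (i : ℕ) hn hnk hilt, ?_, bdom_Ac hn hnk hilt⟩
    apply Fin.ext
    show Fc n k (Ac n k (i : ℕ)) = (i : ℕ)
    rw [Fc_Ac hn hnk hilt]

/-! ### the Kneser graph is not 2-colorable -/

lemma Wv_aux {k i : ℕ} (hk : 1 ≤ k) :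
    ((Finset.range k).image (fun a => (i*k + a) % (2*k+1) + 1)).card = k ∧
    ((Finset.range k).image (fun a => (i*k + a) % (2*k+1) + 1)) ⊆ Finset.Icc 1 (2*k+1) := by
  constructor
  · rw [Finset.card_image_of_injOn, Finset.card_range]
    intro a ha b hb hab
    simp only [Finset.mem_coe, Finset.mem_range] at ha hb
    dsimp only at hab
    have h1 : (i*k + a) % (2*k+1) = (i*k + b) % (2*k+1) := by omega
    have h2 : a % (2*k+1) = b % (2*k+1) :=
      Nat.ModEq.add_left_cancel' (i*k) h1
    rw [Nat.mod_eq_of_lt (by omega), Nat.mod_eq_of_lt (by omega)] at h2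
    exact h2
  · intro a ha
    simp only [Finset.mem_image, Finset.mem_range] at ha
    obtain ⟨b, _, rfl⟩ := ha
    have := Nat.mod_lt (i*k + b) (show 0 < 2*k+1 by omega)
    rw [Finset.mem_Icc]
    omega

noncomputable def Wv (k i : ℕ) (hk : 1 ≤ k) : KneserVert (2*k+1) k :=
  ⟨(Finset.range k).image (fun a => (i*k + a) % (2*k+1) + 1),
    (Wv_aux hk).2, (Wv_aux hk).1⟩

lemma Wv_adj {k : ℕ} (hk : 1 ≤ k) (i : ℕ) :
    (KG (2*k+1) k).Adj (Wv k i hk) (Wv k (i+1) hk) := by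
  apply adj_of_disj hk
  rw [Finset.disjoint_left]
  intro x hx hy
  simp only [Wv, Finset.mem_image, Finset.mem_range] at hx hy
  obtain ⟨a, ha, rfl⟩ := hx
  obtain ⟨b, hb, hab⟩ := hy
  have h1 : ((i+1)*k + b) % (2*k+1) = (i*k + a) % (2*k+1) := by omega
  have h2 : (i*k + (k + b)) % (2*k+1) = (i*k + a) % (2*k+1) := by
    rw [← h1]; ring_nf
  have h3 : (k + b) % (2*k+1) = a % (2*k+1) :=
    Nat.ModEq.add_left_cancel' (i*k) h2
  rw [Nat.mod_eq_of_lt (by omega), Nat.mod_eq_of_lt (by omega)] at h3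
  omega

lemma Wv_period {k : ℕ} (hk : 1 ≤ k) : Wv k (2*k+1) hk = Wv k 0 hk := by
  apply Subtype.ext
  show Finset.image _ _ = Finset.image _ _
  apply Finset.image_congr
  intro a _
  show ((2*k+1)*k + a) % (2*k+1) + 1 = (0*k + a) % (2*k+1) + 1
  have : (2*k+1)*k + a = a + k*(2*k+1) := by ring
  rw [this, Nat.add_mul_mod_self_right]
  norm_num

lemma fin2_trick : ∀ a b c : Fin 2, a ≠ b → c ≠ b → c = a := by decide

lemma not_colorable_two {k : ℕ} (hk : 1 ≤ k) : ¬ (KG (2*k+1) k).Colorable 2 := by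
  rintro ⟨C⟩
  have key : ∀ i, (C (Wv k i hk) = C (Wv k 0 hk) ↔ Even i) := by
    intro i
    induction i with
    | zero => simp
    | succ i ih =>
      have hadj := C.valid (Wv_adj hk i)
      by_cases he : Even i
      · have hC : C (Wv k i hk) = C (Wv k 0 hk) := ih.mpr he
        constructor
        · intro h
          exact absurd (h.trans hC.symm).symm hadj
        · intro h
          exact absurd h (by simp [Nat.even_add_one, he])
      · have hne : C (Wv k i hk) ≠ C (Wv k 0 hk) := fun h => he (ih.mp h)
        have hgoal : C (Wv k (i+1) hk) = C (Wv k 0 hk) :=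
          fin2_trick _ _ _ (Ne.symm hne) (fun h => hadj h.symm)
        constructor
        · intro _
          simp [Nat.even_add_one, he]
        · intro _; exact hgoal
  have h1 := (key (2*k+1)).mp (by rw [Wv_period hk])
  rcases h1 with ⟨r, hr⟩
  omega

/-! ### upper bound for BSet -/

lemma bset_le {k m : ℕ} (hk : 1 ≤ k) (hm : m ∈ BSet (KG (2*k+1) k)) : m ≤ k + 2 := by
  obtain ⟨hpos, f, hproper, hcolorful⟩ := hm
  obtain ⟨v, -, hbdom⟩ := hcolorful ⟨0, hpos⟩
  have hwit : ∀ i : Fin m, ∃ u : KneserVert (2*k+1) k,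
      (f v = i ∧ u = v) ∨ ((KG (2*k+1) k).Adj v u ∧ f u = i) := by
    intro i
    rcases hbdom i with h | ⟨u, hu⟩
    · exact ⟨v, Or.inl ⟨h, rfl⟩⟩
    · exact ⟨u, Or.inr hu⟩
  choose g hg using hwit
  set T : Finset (Finset ℕ) :=
    insert v.1 ((Finset.Icc 1 (2*k+1) \ v.1).powersetCard k) with hT
  have hmaps : ∀ i : Fin m, (g i).1 ∈ T := by
    intro i
    rcases hg i with ⟨-, rfl⟩ | ⟨⟨-, hdisj⟩, -⟩
    · exact Finset.mem_insert_self _ _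
    · apply Finset.mem_insert_of_mem
      rw [Finset.mem_powersetCard]
      refine ⟨?_, (g i).2.2⟩
      intro a ha
      rw [Finset.mem_sdiff]
      exact ⟨(g i).2.1 ha, fun hv => Finset.disjoint_left.mp hdisj hv ha⟩
  have hinj : Function.Injective (fun i : Fin m => (g i).1) := by
    intro i i' heq
    have heq' : g i = g i' := Subtype.ext heq
    rcases hg i with ⟨h1, h2⟩ | ⟨⟨hne1, -⟩, h2⟩ <;>
      rcases hg i' with ⟨h1', h2'⟩ | ⟨⟨hne1', -⟩, h2'⟩
    · rw [← h1, ← h1']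
    · exact absurd (heq' ▸ h2) (fun hh => hne1' hh.symm)
    · exact absurd (heq'.symm ▸ h2') (fun hh => hne1 hh.symm)
    · rw [← h2, ← h2', heq']
  have hcard : m ≤ T.card := by
    have := Finset.card_le_card_of_injOn (s := Finset.univ) (t := T)
      (fun i : Fin m => (g i).1) (fun i _ => hmaps i) (hinj.injOn)
    simpa using this
  have hTcard : T.card ≤ k + 2 := by
    apply le_trans (Finset.card_insert_le _ _)
    rw [Finset.card_powersetCard, Finset.card_sdiff_of_subset v.2.1, Nat.card_Icc, v.2.2]
    have : 2*k+1+1-1-k = k+1 := by omega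
    rw [this, Nat.choose_succ_self_right]
  omega

end KGB

/-- For every `k ≥ 1`, the Kneser graph `KG (2k+1) k` is b-continuous:
every integer `j` with `χ(KG(2k+1,k)) ≤ j ≤ b(KG(2k+1,k))` belongs to `B(KG(2k+1,k))`. -/
theorem stmt_5 (k : ℕ) (hk : 1 ≤ k) (j : ℕ)
    (h₁ : (KG (2 * k + 1) k).chromaticNumber ≤ (j : ℕ∞))
    (h₂ : j ≤ bChromaticNumber (KG (2 * k + 1) k)) :
    j ∈ BSet (KG (2 * k + 1) k) := by
  have hcol : (KG (2 * k + 1) k).Colorable j :=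
    (SimpleGraph.chromaticNumber_le_iff_colorable).mp h₁
  have hj3 : 3 ≤ j := by
    by_contra hlt
    exact KGB.not_colorable_two hk (hcol.mono (by omega))
  rcases Nat.lt_or_ge j (k + 2) with hjk | hjk
  · -- 3 ≤ j ≤ k+1 : explicit construction
    have h := KGB.construction (n := j - 1) (k := k) (by omega) (by omega)
    have : j - 1 + 1 = j := by omega
    rwa [this] at h
  · -- j = k+2 : j equals the supremum, which is attained
    have hbdd : BddAbove (BSet (KG (2 * k + 1) k)) :=
      ⟨k + 2, fun m hm => KGB.bset_le hk hm⟩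
    have hne : (BSet (KG (2 * k + 1) k)).Nonempty := by
      by_contra hne
      rw [Set.not_nonempty_iff_eq_empty] at hne
      rw [bChromaticNumber, hne] at h₂
      simp at h₂
      omega
    have hmem := Nat.sSup_mem hne hbdd
    have hle : sSup (BSet (KG (2 * k + 1) k)) ≤ k + 2 := KGB.bset_le hk hmem
    have : j = sSup (BSet (KG (2 * k + 1) k)) := by
      rw [bChromaticNumber] at h₂; omega
    rw [this]
    exact hmem
end

section
/- Let n, m be positive integers with n > 2m. Define f from the vertices of KG(n+2, m+1) to the vertices of KG(n, m) by: if A ⊆ {1,...,n+2} with |A ∩ {n+1, n+2}| ≤ 1, then f(A) = A \ {max A}; and if {n+1, n+2} ⊆ A, then f(A) = (A \ {n+1, n+2}) ∪ {max({1,...,n} \ A)}. Then f is a semi-locally-surjective graph homomorphism from KG(n+2, m+1) to KG(n, m). -/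
open Finset

lemma sup_id_mem {A : Finset ℕ} (h : A.Nonempty) : A.sup id ∈ A := by
  have h1 : A.sup id = A.max' h := by
    rw [Finset.max']
    exact (Finset.sup'_eq_sup h id).symm
  rw [h1]; exact A.max'_mem h

def kgimg (n : ℕ) (A : Finset ℕ) : Finset ℕ :=
  if (A ∩ ({n + 1, n + 2} : Finset ℕ)).card ≤ 1 then A.erase (A.sup id)
  else (A \ ({n + 1, n + 2} : Finset ℕ)) ∪ {(Finset.Icc 1 n \ A).sup id}

lemma pair_card (n : ℕ) : ({n + 1, n + 2} : Finset ℕ).card = 2 := by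
  rw [card_insert_of_notMem (by simp), card_singleton]

lemma case2_mem {n : ℕ} {A : Finset ℕ}
    (h : ¬ (A ∩ ({n + 1, n + 2} : Finset ℕ)).card ≤ 1) :
    n + 1 ∈ A ∧ n + 2 ∈ A := by
  have hsub : A ∩ ({n + 1, n + 2} : Finset ℕ) ⊆ {n + 1, n + 2} := inter_subset_right
  have h2 : ({n + 1, n + 2} : Finset ℕ).card ≤ (A ∩ ({n + 1, n + 2} : Finset ℕ)).card := by
    rw [pair_card]; omega
  have hEq := eq_of_subset_of_card_le hsub h2
  constructor
  · have : (n + 1) ∈ A ∩ ({n + 1, n + 2} : Finset ℕ) := by rw [hEq]; simp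
    exact (mem_inter.1 this).1
  · have : (n + 2) ∈ A ∩ ({n + 1, n + 2} : Finset ℕ) := by rw [hEq]; simp
    exact (mem_inter.1 this).1

lemma kgimg_spec {n m : ℕ} (hm : 0 < m) (hnm : n > 2 * m) {A : Finset ℕ}
    (hA : A ⊆ Finset.Icc 1 (n + 2)) (hc : A.card = m + 1) :
    kgimg n A ⊆ Finset.Icc 1 n ∧ (kgimg n A).card = m := by
  unfold kgimg
  split_ifs with h
  · have hne : A.Nonempty := card_pos.1 (by omega)
    have hmem := sup_id_mem hne
    have hsle : A.sup id ≤ n + 2 := Finset.sup_le fun a ha => (mem_Icc.1 (hA ha)).2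
    constructor
    · intro x hx
      obtain ⟨hxne, hxA⟩ := mem_erase.1 hx
      have h1 := mem_Icc.1 (hA hxA)
      have hle : x ≤ A.sup id := Finset.le_sup (f := id) hxA
      rw [mem_Icc]
      refine ⟨h1.1, ?_⟩
      by_contra hgt
      push_neg at hgt
      have hx12 : x = n + 1 ∨ x = n + 2 := by omega
      rcases hx12 with rfl | rfl
      · have hs : A.sup id = n + 2 := by omega
        have h1' : (n + 1) ∈ A ∩ ({n + 1, n + 2} : Finset ℕ) := by simp [hxA]
        have h2' : (n + 2) ∈ A ∩ ({n + 1, n + 2} : Finset ℕ) := by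
          rw [hs] at hmem; simp [hmem]
        have hcard2 : 1 < (A ∩ ({n + 1, n + 2} : Finset ℕ)).card :=
          Finset.one_lt_card.2 ⟨n + 1, h1', n + 2, h2', by omega⟩
        omega
      · omega
    · rw [card_erase_of_mem hmem, hc]; omega
  · obtain ⟨h1, h2⟩ := case2_mem h
    have hPA : ({n + 1, n + 2} : Finset ℕ) ⊆ A := by
      simp [insert_subset_iff, h1, h2]
    have hfree : (Finset.Icc 1 n \ A).Nonempty := by
      by_contra hE
      rw [not_nonempty_iff_eq_empty, sdiff_eq_empty_iff_subset] at hE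
      have hcle := card_le_card hE
      rw [Nat.card_Icc] at hcle
      omega
    have hMmem := sup_id_mem hfree
    have hMIcc : (Finset.Icc 1 n \ A).sup id ∈ Finset.Icc 1 n := (mem_sdiff.1 hMmem).1
    have hMA : (Finset.Icc 1 n \ A).sup id ∉ A := (mem_sdiff.1 hMmem).2
    constructor
    · intro x hx
      rcases mem_union.1 hx with hx | hx
      · obtain ⟨hxA, hxP⟩ := mem_sdiff.1 hx
        have h1' := mem_Icc.1 (hA hxA)
        simp only [mem_insert, mem_singleton] at hxP
        push_neg at hxP
        rw [mem_Icc]; omega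
      · rw [mem_singleton.1 hx]; exact hMIcc
    · rw [card_union_of_disjoint (by simp [hMA]), card_sdiff_of_subset hPA, pair_card,
        card_singleton, hc]
      omega

lemma kgimg_disj_key {n m : ℕ} (hm : 0 < m)
    {A B : Finset ℕ} (hA : A ⊆ Finset.Icc 1 (n + 2)) (hAc : A.card = m + 1)
    (hD : Disjoint A B) (h1 : n + 1 ∈ B) (h2 : n + 2 ∈ B) :
    Disjoint (A.erase (A.sup id))
      ((B \ ({n + 1, n + 2} : Finset ℕ)) ∪ {(Finset.Icc 1 n \ B).sup id}) := by
  rw [disjoint_left]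
  intro x hx hx'
  obtain ⟨hxne, hxA⟩ := mem_erase.1 hx
  rcases mem_union.1 hx' with h | h
  · exact (disjoint_left.1 hD hxA) (mem_sdiff.1 h).1
  · have hxM : x = (Finset.Icc 1 n \ B).sup id := mem_singleton.1 h
    have hAn : A ⊆ Finset.Icc 1 n := by
      intro a ha
      have h1' := mem_Icc.1 (hA ha)
      have hne1 : a ≠ n + 1 := fun he => disjoint_left.1 hD ha (by rw [he]; exact h1)
      have hne2 : a ≠ n + 2 := fun he => disjoint_left.1 hD ha (by rw [he]; exact h2)
      rw [mem_Icc]; omega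
    have hne : A.Nonempty := card_pos.1 (by omega)
    have hsupA := sup_id_mem hne
    have hsupIn : A.sup id ∈ Finset.Icc 1 n \ B :=
      mem_sdiff.2 ⟨hAn hsupA, fun hh => disjoint_left.1 hD hsupA hh⟩
    have h3 : A.sup id ≤ (Finset.Icc 1 n \ B).sup id := Finset.le_sup (f := id) hsupIn
    have h4 : x ≤ A.sup id := Finset.le_sup (f := id) hxA
    omega

lemma kgimg_disjoint {n m : ℕ} (hm : 0 < m)
    {A B : Finset ℕ} (hA : A ⊆ Finset.Icc 1 (n + 2)) (hAc : A.card = m + 1)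
    (hB : B ⊆ Finset.Icc 1 (n + 2)) (hBc : B.card = m + 1)
    (hD : Disjoint A B) :
    Disjoint (kgimg n A) (kgimg n B) := by
  by_cases ha : (A ∩ ({n + 1, n + 2} : Finset ℕ)).card ≤ 1 <;>
    by_cases hb : (B ∩ ({n + 1, n + 2} : Finset ℕ)).card ≤ 1
  · rw [kgimg, kgimg, if_pos ha, if_pos hb]
    exact hD.mono (erase_subset _ _) (erase_subset _ _)
  · rw [kgimg, kgimg, if_pos ha, if_neg hb]
    obtain ⟨h1, h2⟩ := case2_mem hb
    exact kgimg_disj_key hm hA hAc hD h1 h2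
  · rw [kgimg, kgimg, if_neg ha, if_pos hb]
    obtain ⟨h1, h2⟩ := case2_mem ha
    exact (kgimg_disj_key hm hB hBc hD.symm h1 h2).symm
  · obtain ⟨h1, _⟩ := case2_mem ha
    obtain ⟨h1', _⟩ := case2_mem hb
    exact ((disjoint_left.1 hD h1) h1').elim

lemma kgimg_insert {n : ℕ} {S : Finset ℕ} (hS : S ⊆ Finset.Icc 1 n)
    {c : ℕ} (hc : c = n + 1 ∨ c = n + 2) : kgimg n (insert c S) = S := by
  have hsup : S.sup id ≤ n := Finset.sup_le fun a ha => (mem_Icc.1 (hS ha)).2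
  have hcS : c ∉ S := fun h => by have := (mem_Icc.1 (hS h)).2; omega
  have hinter : (insert c S) ∩ ({n + 1, n + 2} : Finset ℕ) = {c} := by
    ext x
    simp only [mem_inter, mem_insert, mem_singleton]
    constructor
    · rintro ⟨hx1, hx2⟩
      rcases hx1 with rfl | hxS
      · rfl
      · have := (mem_Icc.1 (hS hxS)).2; omega
    · rintro rfl
      exact ⟨Or.inl rfl, by omega⟩
  have hsupi : (insert c S).sup id = c := by
    rw [sup_insert]
    exact sup_eq_left.2 (by simpa using hsup.trans (by omega))
  rw [kgimg, if_pos (by rw [hinter, card_singleton]), hsupi, erase_insert hcS]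

lemma lift_sub {n m : ℕ} (S : KneserVert n m) {c : ℕ} (hc : c = n + 1 ∨ c = n + 2) :
    insert c S.1 ⊆ Finset.Icc 1 (n + 2) ∧ (insert c S.1).card = m + 1 := by
  have hcS : c ∉ S.1 := fun h => by
    have := (Finset.mem_Icc.1 (S.2.1 h)).2; omega
  constructor
  · intro x hx
    rcases Finset.mem_insert.1 hx with rfl | hx
    · rw [Finset.mem_Icc]; omega
    · have := Finset.mem_Icc.1 (S.2.1 hx); rw [Finset.mem_Icc]; omega
  · rw [Finset.card_insert_of_notMem hcS, S.2.2]

/-- For `n > 2m` (with `n, m` positive), the map sending an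
`(m+1)`-subset `A` of `{1, ..., n+2}` with `|A ∩ {n+1, n+2}| ≤ 1` to `A \ {max A}`,
and an `A` containing both `n+1` and `n+2` to `(A \ {n+1, n+2}) ∪ {max({1,...,n} \ A)}`,
is a semi-locally-surjective graph homomorphism from `KG (n+2) (m+1)` to `KG n m`.
(For a nonempty `A : Finset ℕ`, its maximum is `A.sup id`.) -/
theorem stmt_6 (n m : ℕ) (hm : 0 < m) (hnm : n > 2 * m) :
    ∃ f : KneserVert (n + 2) (m + 1) → KneserVert n m,
      (∀ A : KneserVert (n + 2) (m + 1),
        (f A).1 =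
          if (A.1 ∩ ({n + 1, n + 2} : Finset ℕ)).card ≤ 1 then
            A.1.erase (A.1.sup id)
          else
            (A.1 \ ({n + 1, n + 2} : Finset ℕ)) ∪ {(Finset.Icc 1 n \ A.1).sup id}) ∧
      IsSLSHom (KG (n + 2) (m + 1)) (KG n m) f := by
  refine ⟨fun A => ⟨kgimg n A.1, kgimg_spec hm hnm A.2.1 A.2.2⟩, fun A => rfl, ?_, ?_, ?_⟩
  · -- homomorphism
    rintro A B ⟨hne, hdis⟩
    have hd := kgimg_disjoint hm A.2.1 A.2.2 B.2.1 B.2.2 hdis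
    refine ⟨?_, hd⟩
    intro hEq
    have h1 : kgimg n A.1 = kgimg n B.1 := congrArg Subtype.val hEq
    rw [h1, disjoint_self] at hd
    have h2 := (kgimg_spec hm hnm B.2.1 B.2.2).2
    rw [hd] at h2
    simp at h2
    omega
  · -- surjective
    intro S
    refine ⟨⟨insert (n + 1) S.1, lift_sub S (Or.inl rfl)⟩, ?_⟩
    exact Subtype.ext (kgimg_insert S.2.1 (Or.inl rfl))
  · -- semi-local surjectivity
    intro S
    refine ⟨⟨insert (n + 1) S.1, lift_sub S (Or.inl rfl)⟩,
      Subtype.ext (kgimg_insert S.2.1 (Or.inl rfl)), ?_⟩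
    rintro T ⟨hST, hd⟩
    refine ⟨⟨insert (n + 2) T.1, lift_sub T (Or.inr rfl)⟩,
      Subtype.ext (kgimg_insert T.2.1 (Or.inr rfl)), ?_, ?_⟩
    · intro hEq
      have hv : insert (n + 1) S.1 = insert (n + 2) T.1 := congrArg Subtype.val hEq
      have hmem : (n + 1) ∈ insert (n + 2) T.1 := by
        rw [← hv]; exact Finset.mem_insert_self _ _
      rcases Finset.mem_insert.1 hmem with h | h
      · omega
      · have := (Finset.mem_Icc.1 (T.2.1 h)).2; omega
    · rw [Finset.disjoint_left]
      intro x hx hx'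
      rcases Finset.mem_insert.1 hx with rfl | hxS
      · rcases Finset.mem_insert.1 hx' with h | h
        · omega
        · have := (Finset.mem_Icc.1 (T.2.1 h)).2; omega
      · rcases Finset.mem_insert.1 hx' with rfl | hxT
        · have := (Finset.mem_Icc.1 (S.2.1 hxS)).2; omega
        · exact Finset.disjoint_left.1 hd hxS hxT
end

section
/- Let n, m be positive integers with n > 2m. Then B(KG(n, m)) ⊆ B(KG(n+2, m+1)); that is, every positive integer k such that KG(n,m) admits a colorful k-coloring also satisfies that KG(n+2, m+1) admits a colorful k-coloring. -/
open Finset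

lemma maxD_mem {s : Finset ℕ} (h : s.Nonempty) : WithBot.unbotD 0 s.max ∈ s := by
  obtain ⟨a, ha⟩ := Finset.max_of_nonempty h
  rw [ha]
  simpa using Finset.mem_of_max ha

lemma le_maxD {s : Finset ℕ} {a : ℕ} (h : a ∈ s) : a ≤ WithBot.unbotD 0 s.max := by
  obtain ⟨b, hb⟩ := Finset.max_of_nonempty ⟨a, h⟩
  have := Finset.le_max h
  rw [hb] at this ⊢
  exact_mod_cast this

/-- The projection from `(m+1)`-subsets of `[n+2]` to `m`-subsets of `[n]`. -/
def phiSet (n : ℕ) (A : Finset ℕ) : Finset ℕ :=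
  if n+1 ∈ A ∧ n+2 ∈ A then
    insert (WithBot.unbotD 0 ((Finset.Icc 1 n) \ ((A.erase (n+1)).erase (n+2))).max)
      ((A.erase (n+1)).erase (n+2))
  else if n+1 ∈ A then A.erase (n+1)
  else if n+2 ∈ A then A.erase (n+2)
  else A.erase (WithBot.unbotD 0 A.max)

lemma core_subset {n : ℕ} {A : Finset ℕ} (hA : A ⊆ Finset.Icc 1 (n+2)) :
    (A.erase (n+1)).erase (n+2) ⊆ Finset.Icc 1 n := by
  intro a ha
  simp only [mem_erase] at ha
  obtain ⟨h2, h1, hmem⟩ := ha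
  have := hA hmem
  simp only [mem_Icc] at this ⊢
  omega

lemma sdiff_nonempty' {n m : ℕ} (hnm : n > 2 * m) {A : Finset ℕ}
    (hcard : A.card = m + 1) (hboth : n+1 ∈ A ∧ n+2 ∈ A) :
    ((Finset.Icc 1 n) \ ((A.erase (n+1)).erase (n+2))).Nonempty := by
  rw [Finset.sdiff_nonempty]
  intro hsub
  have h1 : (Finset.Icc 1 n).card ≤ ((A.erase (n+1)).erase (n+2)).card :=
    Finset.card_le_card hsub
  have hmem2 : n+2 ∈ A.erase (n+1) := Finset.mem_erase.2 ⟨by omega, hboth.2⟩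
  have h2 : ((A.erase (n+1)).erase (n+2)).card = m - 1 := by
    rw [Finset.card_erase_of_mem hmem2, Finset.card_erase_of_mem hboth.1, hcard]; omega
  rw [Nat.card_Icc, h2] at h1
  omega

lemma core_card {n m : ℕ} {A : Finset ℕ} (hcard : A.card = m + 1)
    (hboth : n+1 ∈ A ∧ n+2 ∈ A) : ((A.erase (n+1)).erase (n+2)).card = m - 1 := by
  have hmem2 : n+2 ∈ A.erase (n+1) := Finset.mem_erase.2 ⟨by omega, hboth.2⟩
  rw [Finset.card_erase_of_mem hmem2, Finset.card_erase_of_mem hboth.1, hcard]; omega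

lemma phiSet_subset {n m : ℕ} (hnm : n > 2 * m) {A : Finset ℕ}
    (hA : A ⊆ Finset.Icc 1 (n+2)) (hcard : A.card = m + 1) :
    phiSet n A ⊆ Finset.Icc 1 n := by
  unfold phiSet
  split_ifs with h1 h2 h3
  · apply Finset.insert_subset
    · have := maxD_mem (sdiff_nonempty' hnm hcard h1)
      exact (Finset.mem_sdiff.1 this).1
    · exact core_subset hA
  · intro a ha
    simp only [mem_erase] at ha
    have hb := hA ha.2
    simp only [mem_Icc] at hb ⊢
    have : a ≠ n + 2 := by
      rintro rfl
      exact h1 ⟨h2, ha.2⟩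
    omega
  · intro a ha
    simp only [mem_erase] at ha
    have hb := hA ha.2
    simp only [mem_Icc] at hb ⊢
    have : a ≠ n + 1 := fun h => h2 (h ▸ ha.2)
    omega
  · intro a ha
    have hmem : a ∈ A := Finset.erase_subset _ _ ha
    have hb := hA hmem
    simp only [mem_Icc] at hb ⊢
    have e1 : a ≠ n + 1 := fun h => h2 (h ▸ hmem)
    have e2 : a ≠ n + 2 := fun h => h3 (h ▸ hmem)
    omega

lemma phiSet_card {n m : ℕ} (hm : 0 < m) (hnm : n > 2 * m) {A : Finset ℕ}
    (hA : A ⊆ Finset.Icc 1 (n+2)) (hcard : A.card = m + 1) :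
    (phiSet n A).card = m := by
  unfold phiSet
  split_ifs with h1 h2 h3
  · rw [Finset.card_insert_of_notMem, core_card hcard h1]
    · omega
    · have := maxD_mem (sdiff_nonempty' hnm hcard h1)
      exact (Finset.mem_sdiff.1 this).2
  · rw [Finset.card_erase_of_mem h2, hcard]; omega
  · rw [Finset.card_erase_of_mem h3, hcard]; omega
  · have hne : A.Nonempty := Finset.card_pos.1 (by omega)
    rw [Finset.card_erase_of_mem (maxD_mem hne), hcard]; omega

lemma phiSet_subset_self {n : ℕ} {A : Finset ℕ} (h : ¬(n+1 ∈ A ∧ n+2 ∈ A)) :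
    phiSet n A ⊆ A := by
  unfold phiSet
  rw [if_neg h]
  split_ifs <;> exact Finset.erase_subset _ _

lemma phiSet_no_special {n : ℕ} {A : Finset ℕ} (hA : A ⊆ Finset.Icc 1 (n+2))
    (h1 : n+1 ∉ A) (h2 : n+2 ∉ A) : A ⊆ Finset.Icc 1 n := by
  intro a ha
  have := hA ha
  simp only [mem_Icc] at this ⊢
  have e1 : a ≠ n + 1 := fun h => h1 (h ▸ ha)
  have e2 : a ≠ n + 2 := fun h => h2 (h ▸ ha)
  omega

lemma case3_disj {n m : ℕ} (hm : 0 < m) (hnm : n > 2 * m) {A B : Finset ℕ}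
    (hA : A ⊆ Finset.Icc 1 (n+2)) (hcA : A.card = m + 1)
    (hB : B ⊆ Finset.Icc 1 (n+2)) (hcB : B.card = m + 1)
    (hboth : n+1 ∈ A ∧ n+2 ∈ A) (hd : Disjoint A B) :
    Disjoint (phiSet n A) (phiSet n B) := by
  have hB1 : n+1 ∉ B := fun h => (Finset.disjoint_left.1 hd hboth.1) h
  have hB2 : n+2 ∉ B := fun h => (Finset.disjoint_left.1 hd hboth.2) h
  have hBn : B ⊆ Finset.Icc 1 n := phiSet_no_special hB hB1 hB2
  have hBne : B.Nonempty := Finset.card_pos.1 (by omega)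
  set S := (A.erase (n+1)).erase (n+2) with hS
  set x := WithBot.unbotD 0 ((Finset.Icc 1 n) \ S).max with hx
  have hpA : phiSet n A = insert x S := by
    unfold phiSet; rw [if_pos hboth]
  have hpB : phiSet n B = B.erase (WithBot.unbotD 0 B.max) := by
    unfold phiSet
    rw [if_neg (by tauto), if_neg hB1, if_neg hB2]
  rw [hpA, hpB, Finset.disjoint_left]
  intro a ha hb
  have haB : a ∈ B := Finset.erase_subset _ _ hb
  rcases Finset.mem_insert.1 ha with rfl | haS
  · -- a = x
    have hM : WithBot.unbotD 0 B.max ∈ B := maxD_mem hBne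
    have hMx : WithBot.unbotD 0 B.max ∈ (Finset.Icc 1 n) \ S := by
      refine Finset.mem_sdiff.2 ⟨hBn hM, fun hMS => ?_⟩
      have : WithBot.unbotD 0 B.max ∈ A := (Finset.erase_subset _ _) ((Finset.erase_subset _ _) hMS)
      exact (Finset.disjoint_left.1 hd this) hM
    have h1 : WithBot.unbotD 0 B.max ≤ x := le_maxD hMx
    have h2 : x ≤ WithBot.unbotD 0 B.max := le_maxD haB
    have h3 : x ≠ WithBot.unbotD 0 B.max := (Finset.mem_erase.1 hb).1
    omega
  · have haA : a ∈ A := (Finset.erase_subset _ _) ((Finset.erase_subset _ _) haS)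
    exact (Finset.disjoint_left.1 hd haA) haB

lemma phiSet_disjoint {n m : ℕ} (hm : 0 < m) (hnm : n > 2 * m) {A B : Finset ℕ}
    (hA : A ⊆ Finset.Icc 1 (n+2)) (hcA : A.card = m + 1)
    (hB : B ⊆ Finset.Icc 1 (n+2)) (hcB : B.card = m + 1)
    (hd : Disjoint A B) : Disjoint (phiSet n A) (phiSet n B) := by
  by_cases hA3 : n+1 ∈ A ∧ n+2 ∈ A
  · exact case3_disj hm hnm hA hcA hB hcB hA3 hd
  · by_cases hB3 : n+1 ∈ B ∧ n+2 ∈ B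
    · exact (case3_disj hm hnm hB hcB hA hcA hB3 hd.symm).symm
    · exact hd.mono (phiSet_subset_self hA3) (phiSet_subset_self hB3)

lemma not_special_mem {n : ℕ} {v : Finset ℕ} (hv : v ⊆ Finset.Icc 1 n) {e : ℕ}
    (he : n < e) : e ∉ v := by
  intro h
  have := hv h
  simp only [mem_Icc] at this
  omega

lemma phiSet_insert1 {n : ℕ} {v : Finset ℕ} (hv : v ⊆ Finset.Icc 1 n) :
    phiSet n (insert (n+1) v) = v := by
  have h1 : n+1 ∉ v := not_special_mem hv (by omega)
  have h2 : n+2 ∉ v := not_special_mem hv (by omega)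
  unfold phiSet
  rw [if_neg, if_pos (Finset.mem_insert_self _ _), Finset.erase_insert h1]
  rintro ⟨-, hc⟩
  rcases Finset.mem_insert.1 hc with h | h
  · omega
  · exact h2 h

lemma phiSet_insert2 {n : ℕ} {v : Finset ℕ} (hv : v ⊆ Finset.Icc 1 n) :
    phiSet n (insert (n+2) v) = v := by
  have h1 : n+1 ∉ v := not_special_mem hv (by omega)
  have h2 : n+2 ∉ v := not_special_mem hv (by omega)
  have hn1 : n+1 ∉ insert (n+2) v := by
    intro hc
    rcases Finset.mem_insert.1 hc with h | h
    · omega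
    · exact h1 h
  unfold phiSet
  rw [if_neg (fun h => hn1 h.1), if_neg hn1, if_pos (Finset.mem_insert_self _ _),
    Finset.erase_insert h2]

lemma up_subset {n m : ℕ} {e : ℕ} (he1 : n+1 ≤ e) (he2 : e ≤ n+2) {v : Finset ℕ}
    (hv : v ⊆ Finset.Icc 1 n) (hc : v.card = m) :
    insert e v ⊆ Finset.Icc 1 (n+2) ∧ (insert e v).card = m + 1 := by
  have hev : e ∉ v := not_special_mem hv (by omega)
  constructor
  · intro a ha
    rcases Finset.mem_insert.1 ha with rfl | h
    · simp only [mem_Icc]; omega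
    · have := hv h; simp only [mem_Icc] at this ⊢; omega
  · rw [Finset.card_insert_of_notMem hev, hc]

/-- For positive integers `n, m` with `n > 2m`,
`B(KG(n,m)) ⊆ B(KG(n+2, m+1))`. -/
theorem stmt_7 (n m : ℕ) (hm : 0 < m) (hnm : n > 2 * m) :
    BSet (KG n m) ⊆ BSet (KG (n + 2) (m + 1)) := by
  rintro k ⟨hk0, f, hproper, hcolorful⟩
  -- the projection map on vertices
  let Φ : KneserVert (n+2) (m+1) → KneserVert n m := fun A =>
    ⟨phiSet n A.1, phiSet_subset hnm A.2.1 A.2.2, phiSet_card hm hnm A.2.1 A.2.2⟩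
  have adjΦ : ∀ A B : KneserVert (n+2) (m+1),
      (KG (n+2) (m+1)).Adj A B → (KG n m).Adj (Φ A) (Φ B) := by
    rintro A B ⟨hne, hd⟩
    have hdis : Disjoint (phiSet n A.1) (phiSet n B.1) :=
      phiSet_disjoint hm hnm A.2.1 A.2.2 B.2.1 B.2.2 hd
    refine ⟨?_, hdis⟩
    intro hEq
    have hset : phiSet n A.1 = phiSet n B.1 := congrArg Subtype.val hEq
    rw [hset] at hdis
    have : phiSet n B.1 = ∅ := (Finset.disjoint_self_iff_empty _).1 hdis
    have hcB : (phiSet n B.1).card = m := phiSet_card hm hnm B.2.1 B.2.2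
    rw [this] at hcB
    simp at hcB
    omega
  refine ⟨hk0, fun A => f (Φ A), ?_, ?_⟩
  · intro A B hadj
    exact hproper _ _ (adjΦ A B hadj)
  · intro i
    obtain ⟨v, hv, hdom⟩ := hcolorful i
    have hup1 := up_subset (le_refl (n+1)) (by omega) v.2.1 v.2.2
    let A : KneserVert (n+2) (m+1) := ⟨insert (n+1) v.1, hup1.1, hup1.2⟩
    have hΦA : Φ A = v := Subtype.ext (phiSet_insert1 v.2.1)
    refine ⟨A, by show f (Φ A) = i; rw [hΦA]; exact hv, ?_⟩
    intro j
    rcases hdom j with h | ⟨u, hu, hfu⟩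
    · left; show f (Φ A) = j; rw [hΦA]; exact h
    · right
      have hup2 := up_subset (by omega) (le_refl (n+2)) u.2.1 u.2.2
      let B : KneserVert (n+2) (m+1) := ⟨insert (n+2) u.1, hup2.1, hup2.2⟩
      have hΦB : Φ B = u := Subtype.ext (phiSet_insert2 u.2.1)
      have hn1B : n+1 ∉ (insert (n+2) u.1) := by
        intro hc
        rcases Finset.mem_insert.1 hc with h' | h'
        · omega
        · exact not_special_mem u.2.1 (by omega) h'
      refine ⟨B, ⟨?_, ?_⟩, by show f (Φ B) = j; rw [hΦB]; exact hfu⟩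
      · intro hEq
        have h' : insert (n+1) (v.1 : Finset ℕ) = insert (n+2) u.1 :=
          congrArg Subtype.val hEq
        exact hn1B (h' ▸ Finset.mem_insert_self (n+1) v.1)
      · rw [Finset.disjoint_left]
        intro a ha hb
        rcases Finset.mem_insert.1 ha with rfl | haV
        · exact hn1B hb
        · rcases Finset.mem_insert.1 hb with rfl | haU
          · exact not_special_mem v.2.1 (by omega) haV
          · exact (Finset.disjoint_left.1 hu.2 haV) haU
end

section
/- Let a, b be nonnegative integers with a > 2b. For each integer i ≥ 2, let B_i := B(KG(2i + a, i + b)). Then B_2 ⊆ B_3 ⊆ B_4 ⊆ ... ; that is, for every integer i ≥ 2, B(KG(2i + a, i + b)) ⊆ B(KG(2(i+1) + a, (i+1) + b)). -/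
-- === auxiliary development ===

lemma bset_mono_of_sls {V W : Type*} (G : SimpleGraph V) (H : SimpleGraph W)
    (g : V → W) (h : IsSLSHom G H g) : BSet H ⊆ BSet G := by
  rintro k ⟨hk, f, hprop, hcol⟩
  refine ⟨hk, f ∘ g, ?_, ?_⟩
  · intro u v huv
    exact hprop _ _ (h.1 u v huv)
  · intro i
    obtain ⟨v, hv, hdom⟩ := hcol i
    obtain ⟨a, ha, hloc⟩ := h.2.2 v
    refine ⟨a, by simp [Function.comp, ha, hv], ?_⟩
    intro j
    rcases hdom j with hj | ⟨u, hadj, hu⟩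
    · left; simp [Function.comp, ha, hj]
    · obtain ⟨c, hc, hac⟩ := hloc u hadj
      right; exact ⟨c, hac, by simp [Function.comp, hc, hu]⟩

lemma sup_mem_of_nonempty {T : Finset ℕ} (h : T.Nonempty) : T.sup id ∈ T := by
  obtain ⟨a, ha, hmax⟩ := T.exists_max_image id h
  have : T.sup id = a := le_antisymm (Finset.sup_le hmax) (Finset.le_sup (f := id) ha)
  rwa [this]

/-- The squash map on raw finsets. -/
def squash (n m : ℕ) (A : Finset ℕ) : Finset ℕ :=
  if m < (A ∩ Finset.Icc 1 n).card then
    (A ∩ Finset.Icc 1 n).erase ((A ∩ Finset.Icc 1 n).sup id)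
  else if (A ∩ Finset.Icc 1 n).card = m then A ∩ Finset.Icc 1 n
  else insert ((Finset.Icc 1 n \ (A ∩ Finset.Icc 1 n)).sup id) (A ∩ Finset.Icc 1 n)

lemma squash_cases (n m : ℕ) (hm : 1 ≤ m) (A : Finset ℕ)
    (hA : A ⊆ Finset.Icc 1 (n+2)) (hcard : A.card = m + 1) :
    (A ⊆ Finset.Icc 1 n ∧ squash n m A = A.erase (A.sup id)) ∨
    ((A ∩ Finset.Icc 1 n).card = m ∧ squash n m A = A ∩ Finset.Icc 1 n) ∨
    (n+1 ∈ A ∧ n+2 ∈ A ∧ (A ∩ Finset.Icc 1 n).card + 1 = m ∧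
      squash n m A =
        insert ((Finset.Icc 1 n \ (A ∩ Finset.Icc 1 n)).sup id) (A ∩ Finset.Icc 1 n)) := by
  classical
  set S := A ∩ Finset.Icc 1 n with hS
  have hSA : S ⊆ A := Finset.inter_subset_left
  have hdiff : A \ S ⊆ {n+1, n+2} := by
    intro a ha
    simp only [hS, Finset.mem_sdiff, Finset.mem_inter, not_and, Finset.mem_Icc] at ha
    have h1 := hA ha.1
    simp only [Finset.mem_Icc] at h1
    have := ha.2 ha.1
    simp only [Finset.mem_insert, Finset.mem_singleton]
    omega
  have hc2 : (A \ S).card ≤ 2 := by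
    have := Finset.card_le_card hdiff
    have h2 : ({n+1, n+2} : Finset ℕ).card ≤ 2 := Finset.card_insert_le _ _ |>.trans (by simp)
    omega
  have hsum : (A \ S).card + S.card = m + 1 := by
    rw [Finset.card_sdiff_add_card_eq_card hSA, hcard]
  have hsq : squash n m A =
      (if m < S.card then S.erase (S.sup id)
       else if S.card = m then S
       else insert ((Finset.Icc 1 n \ S).sup id) S) := by
    rw [squash, ← hS]
  rcases lt_trichotomy S.card m with hlt | heq | hgt
  · right; right
    have hc : (A \ S).card = 2 := by omega
    have hdeq : A \ S = {n+1, n+2} := Finset.eq_of_subset_of_card_le hdiff (by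
      have h2 : ({n+1, n+2} : Finset ℕ).card ≤ 2 := Finset.card_insert_le _ _ |>.trans (by simp)
      omega)
    have h1 : n+1 ∈ A := by
      have : n+1 ∈ A \ S := by rw [hdeq]; simp
      exact (Finset.mem_sdiff.mp this).1
    have h2 : n+2 ∈ A := by
      have : n+2 ∈ A \ S := by rw [hdeq]; simp
      exact (Finset.mem_sdiff.mp this).1
    refine ⟨h1, h2, by omega, ?_⟩
    rw [hsq, if_neg (by omega), if_neg (by omega)]
  · right; left
    refine ⟨heq, ?_⟩
    rw [hsq, if_neg (by omega), if_pos heq]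
  · left
    have hcS : S.card = m + 1 := by
      have := Finset.card_le_card hSA
      omega
    have hSeqA : S = A := Finset.eq_of_subset_of_card_le hSA (by omega)
    have hsub : A ⊆ Finset.Icc 1 n := by
      rw [← hSeqA]; exact Finset.inter_subset_right
    refine ⟨hsub, ?_⟩
    rw [hsq, if_pos (by omega), hSeqA]

lemma squash_subset (n m : ℕ) (hm : 1 ≤ m) (hmn : m ≤ n) (A : Finset ℕ)
    (hA : A ⊆ Finset.Icc 1 (n+2)) (hcard : A.card = m + 1) :
    squash n m A ⊆ Finset.Icc 1 n := by
  rcases squash_cases n m hm A hA hcard with ⟨hsub, heq⟩ | ⟨hc, heq⟩ | ⟨h1, h2, hc, heq⟩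
  · rw [heq]; exact (Finset.erase_subset _ _).trans hsub
  · rw [heq]; exact Finset.inter_subset_right
  · rw [heq]
    have hne : (Finset.Icc 1 n \ (A ∩ Finset.Icc 1 n)).Nonempty := by
      rw [← Finset.card_pos, Finset.card_sdiff_of_subset Finset.inter_subset_right,
        Nat.card_Icc]
      omega
    have hmem := sup_mem_of_nonempty hne
    intro x hx
    rcases Finset.mem_insert.mp hx with rfl | hx
    · exact (Finset.mem_sdiff.mp hmem).1
    · exact Finset.inter_subset_right hx

lemma squash_card (n m : ℕ) (hm : 1 ≤ m) (hmn : m ≤ n) (A : Finset ℕ)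
    (hA : A ⊆ Finset.Icc 1 (n+2)) (hcard : A.card = m + 1) :
    (squash n m A).card = m := by
  rcases squash_cases n m hm A hA hcard with ⟨hsub, heq⟩ | ⟨hc, heq⟩ | ⟨h1, h2, hc, heq⟩
  · have hne : A.Nonempty := Finset.card_pos.mp (by omega)
    rw [heq, Finset.card_erase_of_mem (sup_mem_of_nonempty hne), hcard]
    omega
  · rw [heq, hc]
  · rw [heq, Finset.card_insert_of_notMem, hc]
    have hne : (Finset.Icc 1 n \ (A ∩ Finset.Icc 1 n)).Nonempty := by
      rw [← Finset.card_pos, Finset.card_sdiff_of_subset Finset.inter_subset_right, Nat.card_Icc]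
      omega
    have hmem := sup_mem_of_nonempty hne
    exact (Finset.mem_sdiff.mp hmem).2

/-- Mixed case: `A` contains both `n+1, n+2`, `B ⊆ Icc 1 n`, disjoint. -/
lemma squash_disj_mixed (n m : ℕ) (hm : 1 ≤ m) (A B : Finset ℕ)
    (hA : A ⊆ Finset.Icc 1 (n+2)) (hcA : A.card = m + 1)
    (hB : B ⊆ Finset.Icc 1 n) (hcB : B.card = m + 1)
    (hd : Disjoint A B) (h1 : n+1 ∈ A) (h2 : n+2 ∈ A) :
    Disjoint (insert ((Finset.Icc 1 n \ (A ∩ Finset.Icc 1 n)).sup id) (A ∩ Finset.Icc 1 n))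
      (B.erase (B.sup id)) := by
  rw [Finset.disjoint_insert_left]
  constructor
  · intro hx
    set x := (Finset.Icc 1 n \ (A ∩ Finset.Icc 1 n)).sup id with hxdef
    have hxB : x ∈ B := Finset.mem_of_mem_erase hx
    have hxne : x ≠ B.sup id := Finset.ne_of_mem_erase hx
    have hBsub : B ⊆ Finset.Icc 1 n \ (A ∩ Finset.Icc 1 n) := by
      intro b hb
      rw [Finset.mem_sdiff]
      refine ⟨hB hb, fun hmem => ?_⟩
      exact (Finset.disjoint_left.mp hd (Finset.mem_inter.mp hmem).1) hb
    have hle1 : B.sup id ≤ x := Finset.sup_mono hBsub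
    have hle2 : x ≤ B.sup id := Finset.le_sup (f := id) hxB
    exact hxne (le_antisymm hle2 hle1)
  · exact (hd.mono Finset.inter_subset_left (Finset.erase_subset _ _)).symm |>.symm

lemma squash_disjoint (n m : ℕ) (hm : 1 ≤ m) (A B : Finset ℕ)
    (hA : A ⊆ Finset.Icc 1 (n+2)) (hcA : A.card = m + 1)
    (hB : B ⊆ Finset.Icc 1 (n+2)) (hcB : B.card = m + 1)
    (hd : Disjoint A B) :
    Disjoint (squash n m A) (squash n m B) := by
  rcases squash_cases n m hm A hA hcA with ⟨hsubA, heqA⟩ | ⟨hcA', heqA⟩ | ⟨ha1, ha2, hcA', heqA⟩ <;>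
    rcases squash_cases n m hm B hB hcB with ⟨hsubB, heqB⟩ | ⟨hcB', heqB⟩ | ⟨hb1, hb2, hcB', heqB⟩
  -- (a)(a)
  · rw [heqA, heqB]
    exact hd.mono (Finset.erase_subset _ _) (Finset.erase_subset _ _)
  -- (a)(b)
  · rw [heqA, heqB]
    exact hd.mono (Finset.erase_subset _ _) Finset.inter_subset_left
  -- (a)(c)
  · rw [heqA, heqB]
    exact (squash_disj_mixed n m hm B A hB hcB hsubA hcA hd.symm hb1 hb2).symm
  -- (b)(a)
  · rw [heqA, heqB]
    exact hd.mono Finset.inter_subset_left (Finset.erase_subset _ _)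
  -- (b)(b)
  · rw [heqA, heqB]
    exact hd.mono Finset.inter_subset_left Finset.inter_subset_left
  -- (b)(c): B contains n+1 and n+2; A must contain one of them -- contradiction? no:
  -- A ∩ Icc 1 n has card m < m+1 so A contains an element of {n+1,n+2} ⊆ B
  · exfalso
    have : ∃ x ∈ A, x ∉ Finset.Icc 1 n := by
      by_contra h
      push_neg at h
      have : A ⊆ Finset.Icc 1 n := h
      have : A ∩ Finset.Icc 1 n = A := Finset.inter_eq_left.mpr this
      rw [this] at hcA'
      omega
    obtain ⟨x, hxA, hxn⟩ := this
    have hx2 := hA hxA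
    simp only [Finset.mem_Icc] at hx2 hxn
    have : x = n+1 ∨ x = n+2 := by omega
    rcases this with rfl | rfl
    · exact Finset.disjoint_left.mp hd hxA hb1
    · exact Finset.disjoint_left.mp hd hxA hb2
  -- (c)(a)
  · rw [heqA, heqB]
    exact squash_disj_mixed n m hm A B hA hcA hsubB hcB hd ha1 ha2
  -- (c)(b): symmetric to (b)(c)
  · exfalso
    have : ∃ x ∈ B, x ∉ Finset.Icc 1 n := by
      by_contra h
      push_neg at h
      have : B ⊆ Finset.Icc 1 n := h
      have : B ∩ Finset.Icc 1 n = B := Finset.inter_eq_left.mpr this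
      rw [this] at hcB'
      omega
    obtain ⟨x, hxB, hxn⟩ := this
    have hx2 := hB hxB
    simp only [Finset.mem_Icc] at hx2 hxn
    have : x = n+1 ∨ x = n+2 := by omega
    rcases this with rfl | rfl
    · exact Finset.disjoint_left.mp hd ha1 hxB
    · exact Finset.disjoint_left.mp hd ha2 hxB
  -- (c)(c): both contain n+1
  · exact (Finset.disjoint_left.mp hd ha1 hb1).elim

lemma squash_insert (n m : ℕ) (t : ℕ) (ht : t = n+1 ∨ t = n+2) (U : Finset ℕ)
    (hU : U ⊆ Finset.Icc 1 n) (hcU : U.card = m) :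
    squash n m (insert t U) = U := by
  have htn : t ∉ Finset.Icc 1 n := by
    simp only [Finset.mem_Icc]; omega
  have hS : insert t U ∩ Finset.Icc 1 n = U := by
    rw [Finset.insert_inter_of_notMem htn, Finset.inter_eq_left.mpr hU]
  rw [squash, hS, if_neg (by omega), if_pos hcU]

/-- The vertex map `KG (n+2) (m+1) → KG n m`. -/
def squashVert (n m : ℕ) (hm : 1 ≤ m) (hmn : m ≤ n)
    (A : KneserVert (n+2) (m+1)) : KneserVert n m :=
  ⟨squash n m A.1, squash_subset n m hm hmn A.1 A.2.1 A.2.2,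
    squash_card n m hm hmn A.1 A.2.1 A.2.2⟩

/-- Auxiliary: `U ∪ {t}` is a vertex of `KG (n+2) (m+1)` for `t ∈ {n+1, n+2}`. -/
lemma insert_vert (n m : ℕ) (t : ℕ) (ht : t = n+1 ∨ t = n+2) (U : Finset ℕ)
    (hU : U ⊆ Finset.Icc 1 n) (hcU : U.card = m) :
    insert t U ⊆ Finset.Icc 1 (n+2) ∧ (insert t U).card = m + 1 := by
  have htn : t ∉ U := fun h => by
    have := hU h; simp only [Finset.mem_Icc] at this; omega
  constructor
  · intro x hx
    rcases Finset.mem_insert.mp hx with rfl | hx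
    · simp only [Finset.mem_Icc]; omega
    · have := hU hx; simp only [Finset.mem_Icc] at this ⊢; omega
  · rw [Finset.card_insert_of_notMem htn, hcU]

lemma squash_sls (n m : ℕ) (hm : 1 ≤ m) (hmn : m ≤ n) :
    IsSLSHom (KG (n+2) (m+1)) (KG n m) (squashVert n m hm hmn) := by
  have hnonempty : ∀ X : KneserVert n m, X.1.Nonempty := fun X =>
    Finset.card_pos.mp (by rw [X.2.2]; omega)
  have hadj : ∀ A B : KneserVert (n+2) (m+1), (KG (n+2) (m+1)).Adj A B →
      (KG n m).Adj (squashVert n m hm hmn A) (squashVert n m hm hmn B) := by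
    intro A B hAB
    have hd : Disjoint (squash n m A.1) (squash n m B.1) :=
      squash_disjoint n m hm A.1 B.1 A.2.1 A.2.2 B.2.1 B.2.2 hAB.2
    refine ⟨fun h => ?_, hd⟩
    have h1 : squash n m A.1 = squash n m B.1 := congrArg Subtype.val h
    rw [h1] at hd
    have hemp : squash n m B.1 = ∅ := (Finset.disjoint_self_iff_empty _).mp hd
    have := squash_card n m hm hmn B.1 B.2.1 B.2.2
    rw [hemp, Finset.card_empty] at this
    omega
  refine ⟨hadj, ?_, ?_⟩
  · intro U
    obtain ⟨hsub, hcard⟩ := insert_vert n m (n+1) (Or.inl rfl) U.1 U.2.1 U.2.2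
    refine ⟨⟨insert (n+1) U.1, hsub, hcard⟩, ?_⟩
    apply Subtype.ext
    exact squash_insert n m (n+1) (Or.inl rfl) U.1 U.2.1 U.2.2
  · intro U
    obtain ⟨hsub, hcard⟩ := insert_vert n m (n+1) (Or.inl rfl) U.1 U.2.1 U.2.2
    refine ⟨⟨insert (n+1) U.1, hsub, hcard⟩,
      Subtype.ext (squash_insert n m (n+1) (Or.inl rfl) U.1 U.2.1 U.2.2), ?_⟩
    intro V hUV
    obtain ⟨hsubV, hcardV⟩ := insert_vert n m (n+2) (Or.inr rfl) V.1 V.2.1 V.2.2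
    refine ⟨⟨insert (n+2) V.1, hsubV, hcardV⟩,
      Subtype.ext (squash_insert n m (n+2) (Or.inr rfl) V.1 V.2.1 V.2.2), ?_, ?_⟩
    · -- the two inserted sets are distinct
      intro h
      have h1 : insert (n+1) U.1 = insert (n+2) V.1 := congrArg Subtype.val h
      have : (n+1 : ℕ) ∈ insert (n+2) V.1 := h1 ▸ Finset.mem_insert_self _ _
      rcases Finset.mem_insert.mp this with h2 | h2
      · omega
      · have := V.2.1 h2; simp only [Finset.mem_Icc] at this; omega
    · -- disjoint
      rw [Finset.disjoint_insert_left]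
      constructor
      · intro h
        rcases Finset.mem_insert.mp h with h2 | h2
        · omega
        · have := V.2.1 h2; simp only [Finset.mem_Icc] at this; omega
      · rw [Finset.disjoint_insert_right]
        refine ⟨fun h => ?_, hUV.2⟩
        have := U.2.1 h; simp only [Finset.mem_Icc] at this; omega

lemma bset_step (n m : ℕ) (hm : 1 ≤ m) (hmn : m ≤ n) :
    BSet (KG n m) ⊆ BSet (KG (n+2) (m+1)) :=
  bset_mono_of_sls _ _ _ (squash_sls n m hm hmn)


/-- For nonnegative integers `a > 2b` and every integer `i ≥ 2`,
`B(KG(2i+a, i+b)) ⊆ B(KG(2(i+1)+a, (i+1)+b))`. -/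
theorem stmt_8 (a b : ℕ) (hab : a > 2 * b) (i : ℕ) (hi : 2 ≤ i) :
    BSet (KG (2 * i + a) (i + b)) ⊆ BSet (KG (2 * (i + 1) + a) ((i + 1) + b)) := by
  have h1 : 2 * (i + 1) + a = (2 * i + a) + 2 := by ring
  have h2 : (i + 1) + b = (i + b) + 1 := by ring
  rw [h1, h2]
  exact bset_step (2 * i + a) (i + b) (by omega) (by omega)
end

section
/- For every natural number k ≥ 3, the Kneser graph KG(2k+1, k) admits a colorful 4-coloring; that is, 4 ∈ B(KG(2k+1, k)). -/
set_option linter.unreachableTactic false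
set_option linter.unnecessarySeqFocus false
set_option linter.unusedTactic false
set_option linter.unusedVariables false

namespace Stmt12Aux

open Finset

def W1 (k : ℕ) : Finset ℕ := insert 1 (Finset.Icc 4 (k+2))
def W2 (k : ℕ) : Finset ℕ := insert 2 (Finset.Icc 5 (k+3))
def W3 (k : ℕ) : Finset ℕ := Finset.Icc (k+2) (2*k+1)
def U0 (k : ℕ) : Finset ℕ := insert 1 (Finset.Icc 3 (k+1))
def V1 (k : ℕ) : Finset ℕ := insert 1 (insert 3 (Finset.Icc (k+4) (2*k+1)))
def V2 (k : ℕ) : Finset ℕ := insert 2 (Finset.Icc (k+3) (2*k+1))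
def V3 (k : ℕ) : Finset ℕ := insert 3 (Finset.Icc (k+3) (2*k+1))
def A1 (k : ℕ) : Finset ℕ := Finset.Icc 1 k
def A2 (k : ℕ) : Finset ℕ := Finset.Icc 2 (k+1)
def B1 (k : ℕ) : Finset ℕ := insert 1 (insert 2 (Finset.Icc 4 (k+1)))
def B2 (k : ℕ) : Finset ℕ := insert 2 (Finset.Icc 4 (k+2))
def C3 (k : ℕ) : Finset ℕ := Finset.Icc 3 (k+2)
def D1 (k : ℕ) : Finset ℕ := insert 1 (insert 3 (Finset.Icc 5 (k+2)))
def E1 (k : ℕ) : Finset ℕ := Finset.Icc 4 (k+3)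
def E2 (k : ℕ) : Finset ℕ := insert 2 (insert 4 (Finset.Icc 5 (k+2)))

/-- The coloring on underlying finsets. -/
def col (k : ℕ) (A : Finset ℕ) : Fin 4 :=
  if A = W1 k ∨ A = W2 k ∨ A = W3 k then 3
  else if A = U0 k then 2
  else if 1 ∈ A then 0
  else if 2 ∈ A then 1
  else 2

lemma ne_of_mem_not_mem {A B : Finset ℕ} {x : ℕ} (h1 : x ∈ A) (h2 : x ∉ B) : A ≠ B :=
  fun h => h2 (h ▸ h1)

section
variable {k : ℕ} (hk : 3 ≤ k)

lemma one_not_mem_W2 : (1 : ℕ) ∉ W2 k := by simp [W2]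
lemma one_not_mem_W3 : (1 : ℕ) ∉ W3 k := by simp [W3]
lemma two_not_mem_W3 (hk : 3 ≤ k) : (2 : ℕ) ∉ W3 k := by simp [W3]
lemma one_mem_W1 : (1 : ℕ) ∈ W1 k := by simp [W1]
lemma two_mem_W2 : (2 : ℕ) ∈ W2 k := by simp [W2]
lemma one_mem_U0 : (1 : ℕ) ∈ U0 k := by simp [U0]

lemma col_eq_three {A : Finset ℕ} (h : A = W1 k ∨ A = W2 k ∨ A = W3 k) :
    col k A = 3 := by unfold col; rw [if_pos h]

lemma col_eq_zero (hk : 3 ≤ k) {A : Finset ℕ} (h1 : A ≠ W1 k) (h2 : A ≠ U0 k)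
    (h3 : 1 ∈ A) : col k A = 0 := by
  unfold col
  rw [if_neg, if_neg h2, if_pos h3]
  push_neg
  exact ⟨h1, ne_of_mem_not_mem h3 one_not_mem_W2,
    ne_of_mem_not_mem h3 one_not_mem_W3⟩

lemma col_eq_one (hk : 3 ≤ k) {A : Finset ℕ} (h2 : A ≠ W2 k) (h1 : 1 ∉ A)
    (h3 : 2 ∈ A) : col k A = 1 := by
  unfold col
  rw [if_neg, if_neg, if_neg h1, if_pos h3]
  · exact (ne_of_mem_not_mem one_mem_U0 h1).symm
  push_neg
  exact ⟨(ne_of_mem_not_mem one_mem_W1 h1).symm, h2,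
    ne_of_mem_not_mem h3 (two_not_mem_W3 hk)⟩

lemma col_eq_two (hk : 3 ≤ k) {A : Finset ℕ} (h3 : A ≠ W3 k) (h1 : 1 ∉ A)
    (h2 : 2 ∉ A) : col k A = 2 := by
  unfold col
  rw [if_neg, if_neg, if_neg h1, if_neg h2]
  · exact (ne_of_mem_not_mem one_mem_U0 h1).symm
  push_neg
  exact ⟨(ne_of_mem_not_mem one_mem_W1 h1).symm,
    (ne_of_mem_not_mem two_mem_W2 h2).symm, h3⟩

lemma col_U0 (hk : 3 ≤ k) : col k (U0 k) = 2 := by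
  unfold col
  rw [if_neg, if_pos rfl]
  push_neg
  refine ⟨?_, ne_of_mem_not_mem one_mem_U0 one_not_mem_W2,
    ne_of_mem_not_mem one_mem_U0 one_not_mem_W3⟩
  exact ne_of_mem_not_mem (show (3:ℕ) ∈ U0 k by simp [U0] <;> omega)
    (show (3:ℕ) ∉ W1 k by simp [W1] <;> omega)

-- col values of the concrete sets
lemma col_W1 : col k (W1 k) = 3 := col_eq_three (Or.inl rfl)
lemma col_W2 : col k (W2 k) = 3 := col_eq_three (Or.inr (Or.inl rfl))
lemma col_W3 : col k (W3 k) = 3 := col_eq_three (Or.inr (Or.inr rfl))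

lemma col_V1 (hk : 3 ≤ k) : col k (V1 k) = 0 :=
  col_eq_zero hk
    (ne_of_mem_not_mem (show (3:ℕ) ∈ V1 k by simp [V1]) (show (3:ℕ) ∉ W1 k by simp [W1] <;> omega))
    (ne_of_mem_not_mem (show (2*k+1 : ℕ) ∈ V1 k by simp [V1] <;> omega)
      (show (2*k+1 : ℕ) ∉ U0 k by simp [U0] <;> omega))
    (by simp [V1])

lemma col_A1 (hk : 3 ≤ k) : col k (A1 k) = 0 :=
  col_eq_zero hk
    (ne_of_mem_not_mem (show (2:ℕ) ∈ A1 k by simp [A1] <;> omega) (show (2:ℕ) ∉ W1 k by simp [W1] <;> omega))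
    (ne_of_mem_not_mem (show (2:ℕ) ∈ A1 k by simp [A1] <;> omega) (show (2:ℕ) ∉ U0 k by simp [U0] <;> omega))
    (by simp [A1] <;> omega)

lemma col_B1 (hk : 3 ≤ k) : col k (B1 k) = 0 :=
  col_eq_zero hk
    (ne_of_mem_not_mem (show (2:ℕ) ∈ B1 k by simp [B1]) (show (2:ℕ) ∉ W1 k by simp [W1] <;> omega))
    (ne_of_mem_not_mem (show (2:ℕ) ∈ B1 k by simp [B1]) (show (2:ℕ) ∉ U0 k by simp [U0] <;> omega))
    (by simp [B1])

lemma col_D1 (hk : 3 ≤ k) : col k (D1 k) = 0 :=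
  col_eq_zero hk
    (ne_of_mem_not_mem (show (3:ℕ) ∈ D1 k by simp [D1]) (show (3:ℕ) ∉ W1 k by simp [W1] <;> omega))
    (ne_of_mem_not_mem (show (k+2:ℕ) ∈ D1 k by simp [D1] <;> omega)
      (show (k+2:ℕ) ∉ U0 k by simp [U0] <;> omega))
    (by simp [D1])

lemma col_V2 (hk : 3 ≤ k) : col k (V2 k) = 1 :=
  col_eq_one hk
    (ne_of_mem_not_mem (show (5:ℕ) ∈ W2 k by simp [W2] <;> omega)
      (show (5:ℕ) ∉ V2 k by simp [V2] <;> omega)).symm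
    (by simp [V2] <;> omega) (by simp [V2])

lemma col_A2 (hk : 3 ≤ k) : col k (A2 k) = 1 :=
  col_eq_one hk
    (ne_of_mem_not_mem (show (3:ℕ) ∈ A2 k by simp [A2] <;> omega) (show (3:ℕ) ∉ W2 k by simp [W2] <;> omega))
    (by simp [A2]) (by simp [A2] <;> omega)

lemma col_B2 (hk : 3 ≤ k) : col k (B2 k) = 1 :=
  col_eq_one hk
    (ne_of_mem_not_mem (show (4:ℕ) ∈ B2 k by simp [B2] <;> omega) (show (4:ℕ) ∉ W2 k by simp [W2] <;> omega))
    (by simp [B2] <;> omega) (by simp [B2])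

lemma col_E2 (hk : 3 ≤ k) : col k (E2 k) = 1 :=
  col_eq_one hk
    (ne_of_mem_not_mem (show (4:ℕ) ∈ E2 k by simp [E2]) (show (4:ℕ) ∉ W2 k by simp [W2] <;> omega))
    (by simp [E2] <;> omega) (by simp [E2])

lemma col_V3 (hk : 3 ≤ k) : col k (V3 k) = 2 :=
  col_eq_two hk
    (ne_of_mem_not_mem (show (3:ℕ) ∈ V3 k by simp [V3]) (show (3:ℕ) ∉ W3 k by simp [W3] <;> omega))
    (by simp [V3] <;> omega) (by simp [V3] <;> omega)

lemma col_C3 (hk : 3 ≤ k) : col k (C3 k) = 2 :=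
  col_eq_two hk
    (ne_of_mem_not_mem (show (3:ℕ) ∈ C3 k by simp [C3] <;> omega) (show (3:ℕ) ∉ W3 k by simp [W3] <;> omega))
    (by simp [C3]) (by simp [C3] <;> omega)

lemma col_E1 (hk : 3 ≤ k) : col k (E1 k) = 2 :=
  col_eq_two hk
    (ne_of_mem_not_mem (show (4:ℕ) ∈ E1 k by simp [E1] <;> omega) (show (4:ℕ) ∉ W3 k by simp [W3] <;> omega))
    (by simp [E1]) (by simp [E1] <;> omega)

-- cardinalities
lemma card_W1 (hk : 3 ≤ k) : (W1 k).card = k := by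
  rw [W1, Finset.card_insert_of_notMem (by simp), Nat.card_Icc]; omega
lemma card_W2 (hk : 3 ≤ k) : (W2 k).card = k := by
  rw [W2, Finset.card_insert_of_notMem (by simp), Nat.card_Icc]; omega
lemma card_W3 (hk : 3 ≤ k) : (W3 k).card = k := by
  rw [W3, Nat.card_Icc]; omega
lemma card_U0 (hk : 3 ≤ k) : (U0 k).card = k := by
  rw [U0, Finset.card_insert_of_notMem (by simp), Nat.card_Icc]; omega
lemma card_V1 (hk : 3 ≤ k) : (V1 k).card = k := by
  rw [V1, Finset.card_insert_of_notMem (by simp <;> omega),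
    Finset.card_insert_of_notMem (by simp <;> omega), Nat.card_Icc]; omega
lemma card_V2 (hk : 3 ≤ k) : (V2 k).card = k := by
  rw [V2, Finset.card_insert_of_notMem (by simp <;> omega), Nat.card_Icc]; omega
lemma card_V3 (hk : 3 ≤ k) : (V3 k).card = k := by
  rw [V3, Finset.card_insert_of_notMem (by simp <;> omega), Nat.card_Icc]; omega
lemma card_A1 (hk : 3 ≤ k) : (A1 k).card = k := by rw [A1, Nat.card_Icc]; omega
lemma card_A2 (hk : 3 ≤ k) : (A2 k).card = k := by rw [A2, Nat.card_Icc]; omega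
lemma card_B1 (hk : 3 ≤ k) : (B1 k).card = k := by
  rw [B1, Finset.card_insert_of_notMem (by simp),
    Finset.card_insert_of_notMem (by simp), Nat.card_Icc]; omega
lemma card_B2 (hk : 3 ≤ k) : (B2 k).card = k := by
  rw [B2, Finset.card_insert_of_notMem (by simp), Nat.card_Icc]; omega
lemma card_C3 (hk : 3 ≤ k) : (C3 k).card = k := by rw [C3, Nat.card_Icc]; omega
lemma card_D1 (hk : 3 ≤ k) : (D1 k).card = k := by
  rw [D1, Finset.card_insert_of_notMem (by simp),
    Finset.card_insert_of_notMem (by simp), Nat.card_Icc]; omega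
lemma card_E1 (hk : 3 ≤ k) : (E1 k).card = k := by rw [E1, Nat.card_Icc]; omega
lemma card_E2 (hk : 3 ≤ k) : (E2 k).card = k := by
  rw [E2, Finset.card_insert_of_notMem (by simp),
    Finset.card_insert_of_notMem (by simp), Nat.card_Icc]; omega

-- subsets of the ground set
lemma sub_W1 (hk : 3 ≤ k) : W1 k ⊆ Finset.Icc 1 (2*k+1) := by
  intro x hx; simp [W1] at hx; simp [Finset.mem_Icc]; omega
lemma sub_W2 (hk : 3 ≤ k) : W2 k ⊆ Finset.Icc 1 (2*k+1) := by
  intro x hx; simp [W2] at hx; simp [Finset.mem_Icc]; omega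
lemma sub_W3 (hk : 3 ≤ k) : W3 k ⊆ Finset.Icc 1 (2*k+1) := by
  intro x hx; simp [W3] at hx; simp [Finset.mem_Icc]; omega
lemma sub_U0 (hk : 3 ≤ k) : U0 k ⊆ Finset.Icc 1 (2*k+1) := by
  intro x hx; simp [U0] at hx; simp [Finset.mem_Icc]; omega
lemma sub_V1 (hk : 3 ≤ k) : V1 k ⊆ Finset.Icc 1 (2*k+1) := by
  intro x hx; simp [V1] at hx; simp [Finset.mem_Icc]; omega
lemma sub_V2 (hk : 3 ≤ k) : V2 k ⊆ Finset.Icc 1 (2*k+1) := by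
  intro x hx; simp [V2] at hx; simp [Finset.mem_Icc]; omega
lemma sub_V3 (hk : 3 ≤ k) : V3 k ⊆ Finset.Icc 1 (2*k+1) := by
  intro x hx; simp [V3] at hx; simp [Finset.mem_Icc]; omega
lemma sub_A1 (hk : 3 ≤ k) : A1 k ⊆ Finset.Icc 1 (2*k+1) := by
  intro x hx; simp [A1] at hx; simp [Finset.mem_Icc]; omega
lemma sub_A2 (hk : 3 ≤ k) : A2 k ⊆ Finset.Icc 1 (2*k+1) := by
  intro x hx; simp [A2] at hx; simp [Finset.mem_Icc]; omega
lemma sub_B1 (hk : 3 ≤ k) : B1 k ⊆ Finset.Icc 1 (2*k+1) := by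
  intro x hx; simp [B1] at hx; simp [Finset.mem_Icc]; omega
lemma sub_B2 (hk : 3 ≤ k) : B2 k ⊆ Finset.Icc 1 (2*k+1) := by
  intro x hx; simp [B2] at hx; simp [Finset.mem_Icc]; omega
lemma sub_C3 (hk : 3 ≤ k) : C3 k ⊆ Finset.Icc 1 (2*k+1) := by
  intro x hx; simp [C3] at hx; simp [Finset.mem_Icc]; omega
lemma sub_D1 (hk : 3 ≤ k) : D1 k ⊆ Finset.Icc 1 (2*k+1) := by
  intro x hx; simp [D1] at hx; simp [Finset.mem_Icc]; omega
lemma sub_E1 (hk : 3 ≤ k) : E1 k ⊆ Finset.Icc 1 (2*k+1) := by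
  intro x hx; simp [E1] at hx; simp [Finset.mem_Icc]; omega
lemma sub_E2 (hk : 3 ≤ k) : E2 k ⊆ Finset.Icc 1 (2*k+1) := by
  intro x hx; simp [E2] at hx; simp [Finset.mem_Icc]; omega

-- disjointness facts (for adjacency)
lemma disj_W3_U0 (hk : 3 ≤ k) : Disjoint (W3 k) (U0 k) := by
  rw [Finset.disjoint_left]; intro a ha hb; simp [W3] at ha; simp [U0] at hb; omega
lemma disj_W3_A1 (hk : 3 ≤ k) : Disjoint (W3 k) (A1 k) := by
  rw [Finset.disjoint_left]; intro a ha hb; simp [W3] at ha; simp [A1] at hb; omega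
lemma disj_W3_A2 (hk : 3 ≤ k) : Disjoint (W3 k) (A2 k) := by
  rw [Finset.disjoint_left]; intro a ha hb; simp [W3] at ha; simp [A2] at hb; omega
lemma disj_V3_W1 (hk : 3 ≤ k) : Disjoint (V3 k) (W1 k) := by
  rw [Finset.disjoint_left]; intro a ha hb; simp [V3] at ha; simp [W1] at hb; omega
lemma disj_V3_B1 (hk : 3 ≤ k) : Disjoint (V3 k) (B1 k) := by
  rw [Finset.disjoint_left]; intro a ha hb; simp [V3] at ha; simp [B1] at hb; omega
lemma disj_V3_B2 (hk : 3 ≤ k) : Disjoint (V3 k) (B2 k) := by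
  rw [Finset.disjoint_left]; intro a ha hb; simp [V3] at ha; simp [B2] at hb; omega
lemma disj_V2_W1 (hk : 3 ≤ k) : Disjoint (V2 k) (W1 k) := by
  rw [Finset.disjoint_left]; intro a ha hb; simp [V2] at ha; simp [W1] at hb; omega
lemma disj_V2_C3 (hk : 3 ≤ k) : Disjoint (V2 k) (C3 k) := by
  rw [Finset.disjoint_left]; intro a ha hb; simp [V2] at ha; simp [C3] at hb; omega
lemma disj_V2_D1 (hk : 3 ≤ k) : Disjoint (V2 k) (D1 k) := by
  rw [Finset.disjoint_left]; intro a ha hb; simp [V2] at ha; simp [D1] at hb; omega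
lemma disj_V1_W2 (hk : 3 ≤ k) : Disjoint (V1 k) (W2 k) := by
  rw [Finset.disjoint_left]; intro a ha hb; simp [V1] at ha; simp [W2] at hb; omega
lemma disj_V1_E1 (hk : 3 ≤ k) : Disjoint (V1 k) (E1 k) := by
  rw [Finset.disjoint_left]; intro a ha hb; simp [V1] at ha; simp [E1] at hb; omega
lemma disj_V1_E2 (hk : 3 ≤ k) : Disjoint (V1 k) (E2 k) := by
  rw [Finset.disjoint_left]; intro a ha hb; simp [V1] at ha; simp [E2] at hb; omega

/-- The main properness lemma. -/
lemma col_proper (hk : 3 ≤ k) {A B : Finset ℕ}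
    (hA1 : A ⊆ Finset.Icc 1 (2*k+1)) (hA2 : A.card = k)
    (hB1 : B ⊆ Finset.Icc 1 (2*k+1)) (hB2 : B.card = k)
    (hne : A ≠ B) (hd : Disjoint A B) : col k A ≠ col k B := by
  -- helper: any color-2 "else"-branch set not equal to U0, disjoint from U0, equals W3
  have key : ∀ C : Finset ℕ, C ⊆ Finset.Icc 1 (2*k+1) → C.card = k →
      1 ∉ C → 2 ∉ C → Disjoint (U0 k) C → C = W3 k := by
    intro C hC1 hC2 h1 h2 hdu
    have hsub : C ⊆ W3 k := by
      intro x hx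
      have hx1 := hC1 hx
      have hx2 : x ∉ U0 k := Finset.disjoint_right.mp hdu hx
      have hx3 : x ≠ 1 := fun h => h1 (h ▸ hx)
      have hx4 : x ≠ 2 := fun h => h2 (h ▸ hx)
      simp [Finset.mem_Icc] at hx1
      simp [U0] at hx2
      simp [W3]
      omega
    exact Finset.eq_of_subset_of_card_le hsub (by rw [hC2, card_W3 hk])
  -- helper: two sets avoiding 1 and 2 cannot be disjoint
  have key2 : ∀ C D : Finset ℕ, C ⊆ Finset.Icc 1 (2*k+1) → C.card = k →
      D ⊆ Finset.Icc 1 (2*k+1) → D.card = k →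
      1 ∉ C → 2 ∉ C → 1 ∉ D → 2 ∉ D → Disjoint C D → False := by
    intro C D hC1 hC2 hD1 hD2 c1 c2 d1 d2 hcd
    have hsub : C ∪ D ⊆ Finset.Icc 3 (2*k+1) := by
      intro x hx
      rcases Finset.mem_union.mp hx with h | h
      · have := hC1 h
        have hx3 : x ≠ 1 := fun hh => c1 (hh ▸ h)
        have hx4 : x ≠ 2 := fun hh => c2 (hh ▸ h)
        simp [Finset.mem_Icc] at this ⊢; omega
      · have := hD1 h
        have hx3 : x ≠ 1 := fun hh => d1 (hh ▸ h)
        have hx4 : x ≠ 2 := fun hh => d2 (hh ▸ h)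
        simp [Finset.mem_Icc] at this ⊢; omega
    have hcard := Finset.card_le_card hsub
    rw [Finset.card_union_of_disjoint hcd, hC2, hD2, Nat.card_Icc] at hcard
    omega
  intro h
  unfold col at h
  split_ifs at h with c1 c2 c3 c4 c5 c6 c7 c8 c9 c10 c11 c12 c13 c14 c15 c16 c17 c18 c19 c20 c21 c22 c23 c24 <;>
    first
      | exact absurd h (by decide)
      | skip
  all_goals clear h
  -- remaining cases
  case _ =>
    -- both in C4
    rcases c1 with rfl | rfl | rfl <;> rcases c2 with h' | h' | h'
    · exact hne h'.symm
    · rw [h'] at hd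
      exact Finset.disjoint_left.mp hd
        (show (5:ℕ) ∈ W1 k by simp [W1] <;> omega)
        (show (5:ℕ) ∈ W2 k by simp [W2] <;> omega)
    · rw [h'] at hd
      exact Finset.disjoint_left.mp hd
        (show (k+2:ℕ) ∈ W1 k by simp [W1] <;> omega)
        (show (k+2:ℕ) ∈ W3 k by simp [W3] <;> omega)
    · rw [h'] at hd
      exact Finset.disjoint_left.mp hd
        (show (5:ℕ) ∈ W2 k by simp [W2] <;> omega)
        (show (5:ℕ) ∈ W1 k by simp [W1] <;> omega)
    · exact hne h'.symm
    · rw [h'] at hd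
      exact Finset.disjoint_left.mp hd
        (show (k+3:ℕ) ∈ W2 k by simp [W2] <;> omega)
        (show (k+3:ℕ) ∈ W3 k by simp [W3] <;> omega)
    · rw [h'] at hd
      exact Finset.disjoint_left.mp hd
        (show (k+2:ℕ) ∈ W3 k by simp [W3] <;> omega)
        (show (k+2:ℕ) ∈ W1 k by simp [W1] <;> omega)
    · rw [h'] at hd
      exact Finset.disjoint_left.mp hd
        (show (k+3:ℕ) ∈ W3 k by simp [W3] <;> omega)
        (show (k+3:ℕ) ∈ W2 k by simp [W2] <;> omega)
    · exact hne h'.symm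
  case _ =>
    exact hne (c6.trans c8.symm)
  case _ =>
    exact c7 (Or.inr (Or.inr (key B hB1 hB2 c9 c10 (c6 ▸ hd))))
  case _ =>
    exact Finset.disjoint_left.mp hd c11 c14
  case _ =>
    exact Finset.disjoint_left.mp hd c16 c20
  case _ =>
    exact c1 (Or.inr (Or.inr (key A hA1 hA2 c11 c16 (c22 ▸ hd.symm))))
  case _ =>
    exact key2 A B hA1 hA2 hB1 hB2 c11 c16 c23 c24 hd

end

end Stmt12Aux

open Stmt12Aux

/-- For every `k ≥ 3`, the Kneser graph `KG (2k+1) k` admits a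
colorful 4-coloring, i.e. `4 ∈ B(KG(2k+1, k))`. -/
theorem stmt_12 (k : ℕ) (hk : 3 ≤ k) :
    4 ∈ BSet (KG (2 * k + 1) k) := by
  have hne' : ∀ {X Y : KneserVert (2*k+1) k}, Disjoint X.1 Y.1 → X ≠ Y := by
    intro X Y h hxy
    rw [hxy, disjoint_self] at h
    have h2 := Y.2.2
    rw [h, Finset.bot_eq_empty] at h2
    simp at h2
    omega
  refine ⟨by norm_num, fun X => col k X.1, ?_, ?_⟩
  · intro X Y hadj
    obtain ⟨hne, hdisj⟩ := hadj
    exact col_proper hk X.2.1 X.2.2 Y.2.1 Y.2.2 (fun h => hne (Subtype.ext h)) hdisj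
  · intro i
    fin_cases i
    · -- color 0 : V1 is b-dominating
      refine ⟨⟨V1 k, sub_V1 hk, card_V1 hk⟩, col_V1 hk, ?_⟩
      intro j
      fin_cases j
      · exact Or.inl (col_V1 hk)
      · exact Or.inr ⟨⟨E2 k, sub_E2 hk, card_E2 hk⟩,
          ⟨hne' (disj_V1_E2 hk), disj_V1_E2 hk⟩, col_E2 hk⟩
      · exact Or.inr ⟨⟨E1 k, sub_E1 hk, card_E1 hk⟩,
          ⟨hne' (disj_V1_E1 hk), disj_V1_E1 hk⟩, col_E1 hk⟩
      · exact Or.inr ⟨⟨W2 k, sub_W2 hk, card_W2 hk⟩,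
          ⟨hne' (disj_V1_W2 hk), disj_V1_W2 hk⟩, col_W2⟩
    · -- color 1 : V2 is b-dominating
      refine ⟨⟨V2 k, sub_V2 hk, card_V2 hk⟩, col_V2 hk, ?_⟩
      intro j
      fin_cases j
      · exact Or.inr ⟨⟨D1 k, sub_D1 hk, card_D1 hk⟩,
          ⟨hne' (disj_V2_D1 hk), disj_V2_D1 hk⟩, col_D1 hk⟩
      · exact Or.inl (col_V2 hk)
      · exact Or.inr ⟨⟨C3 k, sub_C3 hk, card_C3 hk⟩,
          ⟨hne' (disj_V2_C3 hk), disj_V2_C3 hk⟩, col_C3 hk⟩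
      · exact Or.inr ⟨⟨W1 k, sub_W1 hk, card_W1 hk⟩,
          ⟨hne' (disj_V2_W1 hk), disj_V2_W1 hk⟩, col_W1⟩
    · -- color 2 : V3 is b-dominating
      refine ⟨⟨V3 k, sub_V3 hk, card_V3 hk⟩, col_V3 hk, ?_⟩
      intro j
      fin_cases j
      · exact Or.inr ⟨⟨B1 k, sub_B1 hk, card_B1 hk⟩,
          ⟨hne' (disj_V3_B1 hk), disj_V3_B1 hk⟩, col_B1 hk⟩
      · exact Or.inr ⟨⟨B2 k, sub_B2 hk, card_B2 hk⟩,
          ⟨hne' (disj_V3_B2 hk), disj_V3_B2 hk⟩, col_B2 hk⟩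
      · exact Or.inl (col_V3 hk)
      · exact Or.inr ⟨⟨W1 k, sub_W1 hk, card_W1 hk⟩,
          ⟨hne' (disj_V3_W1 hk), disj_V3_W1 hk⟩, col_W1⟩
    · -- color 3 : W3 is b-dominating
      refine ⟨⟨W3 k, sub_W3 hk, card_W3 hk⟩, col_W3, ?_⟩
      intro j
      fin_cases j
      · exact Or.inr ⟨⟨A1 k, sub_A1 hk, card_A1 hk⟩,
          ⟨hne' (disj_W3_A1 hk), disj_W3_A1 hk⟩, col_A1 hk⟩
      · exact Or.inr ⟨⟨A2 k, sub_A2 hk, card_A2 hk⟩,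
          ⟨hne' (disj_W3_A2 hk), disj_W3_A2 hk⟩, col_A2 hk⟩
      · exact Or.inr ⟨⟨U0 k, sub_U0 hk, card_U0 hk⟩,
          ⟨hne' (disj_W3_U0 hk), disj_W3_U0 hk⟩, col_U0 hk⟩
      · exact Or.inl col_W3
end
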